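/- arXiv:2209.10330 — 7 statements merged into one kernel-verified Lean document; each statement's English description precedes it below -/
import Mathlib

section
/- Fix α > 0 and t ∈ (0,1]. Define k_t(μ) = [(1+tμ)^{2α} ln(1 + t/μ) + (μ+t)^{2α} ln(1+tμ)] / [(1+tμ)^{2α} + (μ+t)^{2α}] for μ ≥ 1. Then k_t(μ) ≥ ln(1+t) for all μ ≥ 1, i.e., inf_{μ ≥ 1} k_t(μ) = ln(1+t). -/
/-- The function k_t(μ) of Lemma 2.4. -/
noncomputable def ktFun (α t μ : ℝ) : ℝ :=
  ((1 + t * μ) ^ (2 * α) * Real.log (1 + t / μ) + (μ + t) ^ (2 * α) * Real.log (1 + t * μ)) /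
    ((1 + t * μ) ^ (2 * α) + (μ + t) ^ (2 * α))

/-- For fixed α > 0 and t ∈ (0,1], k_t(μ) ≥ ln(1+t) for all μ ≥ 1, and
    inf_{μ ≥ 1} k_t(μ) = ln(1+t). -/
theorem ktFun_inf (α t : ℝ) (hα : 0 < α) (ht : 0 < t) (ht1 : t ≤ 1) :
    (∀ μ : ℝ, 1 ≤ μ → Real.log (1 + t) ≤ ktFun α t μ) ∧
      sInf (ktFun α t '' Set.Ici 1) = Real.log (1 + t) := by
  have hmain : ∀ μ : ℝ, 1 ≤ μ → Real.log (1 + t) ≤ ktFun α t μ := by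
    intro μ hμ
    have hμ0 : (0:ℝ) < μ := lt_of_lt_of_le one_pos hμ
    have h1 : (0:ℝ) < 1 + t * μ := by nlinarith
    have h2 : (0:ℝ) < μ + t := by linarith
    set A := (1 + t * μ) ^ (2 * α) with hA
    set B := (μ + t) ^ (2 * α) with hB
    have hApos : 0 < A := Real.rpow_pos_of_pos h1 _
    have hBpos : 0 < B := Real.rpow_pos_of_pos h2 _
    have hAB : A ≤ B := by
      apply Real.rpow_le_rpow (le_of_lt h1) (by nlinarith) (by positivity)
    set a := Real.log (1 + t / μ) with ha'
    set b := Real.log (1 + t * μ) with hb'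
    set L := Real.log (1 + t) with hL'
    have htμ : t / μ ≤ t := by
      rw [div_le_iff₀ hμ0]; nlinarith
    have htμ0 : 0 < t / μ := div_pos ht hμ0
    have haL : a ≤ L := Real.log_le_log (by linarith) (by linarith)
    have hbL : L ≤ b := Real.log_le_log (by linarith) (by nlinarith)
    have hab : 2 * L ≤ a + b := by
      have hprod : (1 + t) * (1 + t) ≤ (1 + t / μ) * (1 + t * μ) := by
        have key : 2 * t - t * μ ≤ t / μ := by
          rw [le_div_iff₀ hμ0]; nlinarith [sq_nonneg (μ - 1)]
        have hsq : t / μ * (t * μ) = t * t := by field_simp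
        nlinarith [key, hsq]
      have h3 : Real.log ((1 + t) * (1 + t)) ≤ Real.log ((1 + t / μ) * (1 + t * μ)) :=
        Real.log_le_log (by positivity) hprod
      rw [Real.log_mul (by positivity) (by positivity),
        Real.log_mul (by positivity) (by positivity)] at h3
      linarith
    rw [ktFun, ← hA, ← hB, ← ha', ← hb', le_div_iff₀ (by positivity)]
    nlinarith [mul_le_mul_of_nonneg_right hAB (by linarith : 0 ≤ b - L),
      mul_nonneg hApos.le (by linarith : 0 ≤ a + b - 2 * L)]
  refine ⟨hmain, ?_⟩
  have hval : ktFun α t 1 = Real.log (1 + t) := by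
    have h1 : (0:ℝ) < (1 + t) ^ (2 * α) := Real.rpow_pos_of_pos (by linarith) _
    simp only [ktFun, mul_one, div_one, one_add_one_eq_two]
    rw [show (1:ℝ) + t = 1 + t from rfl]
    field_simp
  have hmem : Real.log (1 + t) ∈ ktFun α t '' Set.Ici 1 :=
    ⟨1, Set.self_mem_Ici, hval⟩
  have hlb : ∀ x ∈ ktFun α t '' Set.Ici 1, Real.log (1 + t) ≤ x := by
    rintro x ⟨μ, hμ, rfl⟩
    exact hmain μ hμ
  exact le_antisymm (csInf_le ⟨_, hlb⟩ hmem) (le_csInf ⟨_, hmem⟩ hlb)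
end

section
/- For any t ∈ (0,1], μ ≥ 1, and α > 0, [ln(1+tμ) − ln(1+t)] / [ln(1+t) − ln(1+t/μ)] ≥ ((1+tμ)/(μ+t))^{2α} whenever μ > 1 (so the denominator is positive). -/
/-- For t ∈ (0,1], μ > 1 and α > 0,
    [ln(1+tμ) - ln(1+t)] / [ln(1+t) - ln(1+t/μ)] ≥ ((1+tμ)/(μ+t))^(2α). -/
theorem log_ratio_ge_rpow (t μ α : ℝ) (ht : 0 < t) (ht1 : t ≤ 1) (hμ : 1 < μ) (hα : 0 < α) :
    ((1 + t * μ) / (μ + t)) ^ (2 * α) ≤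
      (Real.log (1 + t * μ) - Real.log (1 + t)) /
        (Real.log (1 + t) - Real.log (1 + t / μ)) := by
  have hμ0 : (0:ℝ) < μ := lt_trans one_pos hμ
  have h1t : (0:ℝ) < 1 + t := by linarith
  have h1tμ : (0:ℝ) < 1 + t * μ := by nlinarith
  have h1td : (0:ℝ) < 1 + t / μ := by positivity
  -- denominator positive
  have hden : 0 < Real.log (1 + t) - Real.log (1 + t / μ) := by
    have : 1 + t / μ < 1 + t := by
      have : t / μ < t := by
        rw [div_lt_iff₀ hμ0]; nlinarith
      linarith
    have := Real.log_lt_log h1td this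
    linarith
  -- LHS ≤ 1
  have hbase : (1 + t * μ) / (μ + t) ≤ 1 := by
    rw [div_le_one (by linarith)]
    nlinarith
  have hL : ((1 + t * μ) / (μ + t)) ^ (2 * α) ≤ 1 :=
    Real.rpow_le_one (by positivity) hbase (by linarith)
  -- RHS ≥ 1
  have hlog : Real.log (1 + t) - Real.log (1 + t / μ) ≤
      Real.log (1 + t * μ) - Real.log (1 + t) := by
    have hkey : (1 + t) * (1 + t) ≤ (1 + t * μ) * (1 + t / μ) := by
      rw [div_eq_mul_inv, ← sub_nonneg]
      have hinv : μ * μ⁻¹ = 1 := mul_inv_cancel₀ (ne_of_gt hμ0)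
      have hsq := sq_nonneg (μ - 1)
      have hi : 0 < μ⁻¹ := by positivity
      nlinarith [mul_pos ht hi, mul_nonneg (mul_nonneg ht.le hi.le) hsq]
    have := Real.log_le_log (by positivity) hkey
    rw [Real.log_mul (ne_of_gt h1t) (ne_of_gt h1t),
        Real.log_mul (ne_of_gt h1tμ) (ne_of_gt h1td)] at this
    linarith
  calc ((1 + t * μ) / (μ + t)) ^ (2 * α) ≤ 1 := hL
    _ ≤ _ := by
        rw [le_div_iff₀ hden]; linarith
end

section
/- Define c*(μ) = ∫₀^∞ ln(z) G_α(z/μ) g_α(z) dz + ∫₀^∞ ln(z) G_α(μz) g_α(z) dz for μ ≥ 1, where g_α and G_α are the pdf and cdf of Gamma(α,1). Then d/dμ c*(μ) = −(Γ(2α) μ^{α−1} ln μ) / (Γ(α)² (1+μ)^{2α}) ≤ 0 for all μ ≥ 1; in particular c*(μ) is nonincreasing on [1,∞). -/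
open MeasureTheory ProbabilityTheory

/-- CDF of the Gamma(α,1) distribution. -/
noncomputable def gammaCDF (α x : ℝ) : ℝ := ∫ t in Set.Iic x, gammaPDFReal α 1 t

/-- c*(μ) = ∫₀^∞ ln(z) G_α(z/μ) g_α(z) dz + ∫₀^∞ ln(z) G_α(μz) g_α(z) dz. -/
noncomputable def cstarW (α μ : ℝ) : ℝ :=
  (∫ z in Set.Ioi (0:ℝ), Real.log z * gammaCDF α (z / μ) * gammaPDFReal α 1 z) +
    ∫ z in Set.Ioi (0:ℝ), Real.log z * gammaCDF α (μ * z) * gammaPDFReal α 1 z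

open Real Set Filter


lemma base_int {t b : ℝ} (ht : -1 < t) (hb : 0 < b) :
    IntegrableOn (fun z : ℝ => z ^ t * Real.exp (-(b * z))) (Ioi 0) := by
  have h0 : IntegrableOn (fun x : ℝ => Real.exp (-x) * x ^ ((t+1) - 1)) (Ioi 0) :=
    Real.GammaIntegral_convergent (by linarith)
  rw [show (0:ℝ) = b * 0 by ring] at h0
  have := (integrableOn_Ioi_comp_mul_left_iff
      (fun x : ℝ => Real.exp (-x) * x ^ ((t+1) - 1)) 0 hb).mpr h0
  have heq : ∀ z ∈ Ioi (0:ℝ), Real.exp (-(b*z)) * (b*z) ^ ((t+1)-1)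
      = b ^ t * (z ^ t * Real.exp (-(b * z))) := by
    intro z hz
    rw [Real.mul_rpow hb.le (le_of_lt hz)]
    ring_nf
  have := (this.congr_fun (fun z hz => heq z hz) measurableSet_Ioi)
  have h2 := this.const_mul (b ^ t)⁻¹
  refine IntegrableOn.congr_fun
    (f := fun x => (b ^ t)⁻¹ * (b ^ t * (x ^ t * Real.exp (-(b * x))))) h2
    (fun z hz => ?_) measurableSet_Ioi
  have : (b:ℝ) ^ t ≠ 0 := (Real.rpow_pos_of_pos hb t).ne'
  field_simp

lemma abs_log_le {z δ : ℝ} (hz : 0 < z) (hδ : 0 < δ) :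
    |Real.log z| ≤ (z ^ δ + z ^ (-δ)) / δ := by
  rcases le_or_gt 1 z with h | h
  · rw [abs_of_nonneg (Real.log_nonneg h)]
    have := Real.log_le_rpow_div (le_of_lt hz) hδ
    have h2 : (0:ℝ) ≤ z ^ (-δ) / δ := by positivity
    calc Real.log z ≤ z ^ δ / δ := this
    _ ≤ (z ^ δ + z ^ (-δ)) / δ := by rw [add_div]; linarith
  · rw [abs_of_nonpos (Real.log_nonpos hz.le h.le)]
    have h1 : Real.log z⁻¹ ≤ (z⁻¹) ^ δ / δ := Real.log_le_rpow_div (by positivity) hδ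
    rw [Real.log_inv, Real.inv_rpow hz.le, ← Real.rpow_neg hz.le] at h1
    have h2 : (0:ℝ) ≤ z ^ δ / δ := by positivity
    calc -Real.log z ≤ z ^ (-δ) / δ := h1
    _ ≤ (z ^ δ + z ^ (-δ)) / δ := by rw [add_div]; linarith

lemma int_log {t b : ℝ} (ht : -1 < t) (hb : 0 < b) :
    IntegrableOn (fun z : ℝ => |Real.log z| * z ^ t * Real.exp (-(b * z))) (Ioi 0) := by
  set δ : ℝ := (t + 1) / 2 with hδdef
  have hδ : 0 < δ := by rw [hδdef]; linarith
  have h1 : IntegrableOn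
      (fun z : ℝ => δ⁻¹ * (z ^ (t + δ) * Real.exp (-(b * z)) + z ^ (t - δ) * Real.exp (-(b * z))))
      (Ioi 0) :=
    ((base_int (by linarith : (-1:ℝ) < t + δ) hb).add
      (base_int (by rw [hδdef]; linarith : (-1:ℝ) < t - δ) hb)).const_mul _
  refine Integrable.mono' h1 ?_ ?_
  · apply Measurable.aestronglyMeasurable
    exact (Real.measurable_log.abs.mul (measurable_id.pow_const t)).mul
      ((measurable_id.const_mul b).neg.exp)
  · filter_upwards [ae_restrict_mem measurableSet_Ioi] with z hz
    have hz0 : (0:ℝ) < z := hz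
    have hfnn : 0 ≤ |Real.log z| * z ^ t * Real.exp (-(b * z)) := by positivity
    rw [Real.norm_eq_abs, abs_of_nonneg hfnn]
    have hl := abs_log_le hz0 hδ
    have key : |Real.log z| * z ^ t * Real.exp (-(b*z))
        ≤ (z ^ δ + z ^ (-δ)) / δ * z ^ t * Real.exp (-(b*z)) := by
      have : (0:ℝ) ≤ z ^ t * Real.exp (-(b*z)) := by positivity
      nlinarith [this, hl]
    refine key.trans (le_of_eq ?_)
    have hδ' : δ ≠ 0 := hδ.ne'
    rw [show t - δ = t + -δ by ring, Real.rpow_add hz0 t δ, Real.rpow_add hz0 t (-δ)]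
    field_simp

lemma int_log' {t b : ℝ} (ht : -1 < t) (hb : 0 < b) :
    IntegrableOn (fun z : ℝ => Real.log z * z ^ t * Real.exp (-(b * z))) (Ioi 0) := by
  refine (int_log ht hb).mono' ?_ ?_
  · apply Measurable.aestronglyMeasurable
    exact (Real.measurable_log.mul (measurable_id.pow_const t)).mul
      ((measurable_id.const_mul b).neg.exp)
  · filter_upwards [ae_restrict_mem measurableSet_Ioi] with z hz
    have hz0 : (0:ℝ) < z := hz
    rw [Real.norm_eq_abs, abs_mul, abs_mul, abs_of_nonneg (Real.rpow_nonneg hz0.le t),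
      abs_of_nonneg (Real.exp_nonneg _)]

lemma I_eval {s b : ℝ} (hs : 0 < s) (hb : 0 < b) :
    ∫ z in Ioi 0, Real.log z * z ^ (s-1) * Real.exp (-(b * z))
      = b ^ (-s) * ((∫ z in Ioi 0, Real.log z * z ^ (s-1) * Real.exp (-z))
          - Real.log b * Real.Gamma s) := by
  have hsub := integral_comp_mul_left_Ioi
    (fun w : ℝ => Real.log (w / b) * (w / b) ^ (s-1) * Real.exp (-w)) 0 hb
  rw [mul_zero] at hsub
  have hL : (∫ x in Ioi (0:ℝ),
        Real.log ((b * x) / b) * ((b * x) / b) ^ (s-1) * Real.exp (-(b * x)))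
      = ∫ z in Ioi (0:ℝ), Real.log z * z ^ (s-1) * Real.exp (-(b * z)) := by
    refine setIntegral_congr_fun measurableSet_Ioi (fun z hz => ?_)
    rw [mul_div_cancel_left₀ _ hb.ne']
  rw [hL] at hsub
  rw [hsub]
  have hR : (∫ w in Ioi (0:ℝ), Real.log (w / b) * (w / b) ^ (s-1) * Real.exp (-w))
      = ∫ w in Ioi (0:ℝ), b ^ (-(s-1)) *
          (Real.log w * w ^ (s-1) * Real.exp (-w) - Real.log b * (w ^ (s-1) * Real.exp (-w))) := by
    refine setIntegral_congr_fun measurableSet_Ioi (fun w hw => ?_)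
    have hw0 : (0:ℝ) < w := hw
    rw [Real.log_div hw0.ne' hb.ne', Real.div_rpow hw0.le hb.le, Real.rpow_neg hb.le,
      div_eq_mul_inv]
    ring
  rw [hR, integral_const_mul]
  have hint1 : IntegrableOn (fun w : ℝ => Real.log w * w ^ (s-1) * Real.exp (-w)) (Ioi 0) := by
    have := int_log' (by linarith : (-1:ℝ) < s - 1) one_pos
    simpa using this
  have hint2 : IntegrableOn (fun w : ℝ => w ^ (s-1) * Real.exp (-w)) (Ioi 0) := by
    have := base_int (by linarith : (-1:ℝ) < s - 1) one_pos
    simpa using this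
  rw [integral_sub hint1 (hint2.const_mul _), integral_const_mul]
  have hG : (∫ w in Ioi (0:ℝ), w ^ (s-1) * Real.exp (-w)) = Real.Gamma s := by
    have := Real.integral_rpow_mul_exp_neg_mul_Ioi hs one_pos
    simp only [one_mul, Real.one_rpow, one_div, inv_one] at this
    rw [← this]
  rw [hG, smul_eq_mul, ← mul_assoc]
  congr 1
  rw [show b⁻¹ = b ^ (-1 : ℝ) by rw [Real.rpow_neg_one], ← Real.rpow_add hb]
  ring_nf


variable {α : ℝ}

lemma integrable_gamma_pdf (hα : 0 < α) : Integrable (gammaPDFReal α 1) := by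
  refine ⟨(stronglyMeasurable_gammaPDFReal α 1).aestronglyMeasurable, ?_⟩
  rw [hasFiniteIntegral_iff_ofReal (ae_of_all _ (gammaPDFReal_nonneg hα one_pos))]
  have h := lintegral_gammaPDF_eq_one hα one_pos
  simp only [gammaPDF] at h
  rw [h]
  exact ENNReal.one_lt_top

lemma ae_ne_zero : ∀ᵐ t : ℝ, t ≠ (0:ℝ) := by
  rw [ae_iff]
  simp only [ne_eq, not_not]
  rw [show {a : ℝ | a = 0} = {(0:ℝ)} by ext; simp]
  exact measure_singleton 0

lemma pdf_ae_zero_Iic {x : ℝ} (hx : x ≤ 0) :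
    ∀ᵐ t : ℝ ∂(volume.restrict (Set.Iic x)), gammaPDFReal α 1 t = 0 := by
  filter_upwards [ae_restrict_mem measurableSet_Iic,
    ae_ne_zero.filter_mono (ae_mono Measure.restrict_le_self)] with t ht htne
  have : t < 0 := lt_of_le_of_ne (le_trans ht hx) (by simpa using htne)
  simp [gammaPDFReal, not_le.mpr this]

lemma pdf_ae_zero_Ioc {x : ℝ} (hx : x ≤ 0) :
    ∀ᵐ t : ℝ ∂(volume.restrict (Set.Ioc x 0)), gammaPDFReal α 1 t = 0 := by
  filter_upwards [ae_restrict_mem measurableSet_Ioc,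
    ae_ne_zero.filter_mono (ae_mono Measure.restrict_le_self)] with t ht htne
  have : t < 0 := lt_of_le_of_ne ht.2 (by simpa using htne)
  simp [gammaPDFReal, not_le.mpr this]

lemma gammaCDF_eq (hα : 0 < α) (x : ℝ) :
    gammaCDF α x = ∫ t in (0:ℝ)..x, gammaPDFReal α 1 t := by
  rcases le_or_gt 0 x with hx | hx
  · rw [intervalIntegral.integral_of_le hx, gammaCDF,
      ← Set.Iic_union_Ioc_eq_Iic hx,
      setIntegral_union (Set.Iic_disjoint_Ioc le_rfl) measurableSet_Ioc
        (integrable_gamma_pdf hα).integrableOn (integrable_gamma_pdf hα).integrableOn,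
      integral_eq_zero_of_ae (pdf_ae_zero_Iic le_rfl), zero_add]
  · rw [intervalIntegral.integral_of_ge hx.le, gammaCDF,
      integral_eq_zero_of_ae (pdf_ae_zero_Iic hx.le),
      integral_eq_zero_of_ae (pdf_ae_zero_Ioc hx.le), neg_zero]

lemma hasDerivAt_gammaCDF (hα : 0 < α) {x : ℝ} (hx : 0 < x) :
    HasDerivAt (gammaCDF α) (gammaPDFReal α 1 x) x := by
  have heq : gammaCDF α = fun u => ∫ t in (0:ℝ)..u, gammaPDFReal α 1 t :=
    funext (gammaCDF_eq hα)
  rw [heq]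
  have hev : ∀ᶠ t in nhds x, (1:ℝ) ^ α / Real.Gamma α * t ^ (α-1) * Real.exp (-(1*t))
      = gammaPDFReal α 1 t := by
    filter_upwards [isOpen_Ioi.mem_nhds hx] with t ht
    simp [gammaPDFReal, if_pos (le_of_lt (Set.mem_Ioi.mp ht))]
  have hc : ContinuousAt (gammaPDFReal α 1) x := by
    refine ContinuousAt.congr ?_ hev
    refine ContinuousAt.mul (ContinuousAt.mul continuousAt_const
      (Real.continuousAt_rpow_const x (α-1) (Or.inl hx.ne'))) ?_
    exact (Real.continuous_exp.comp ((continuous_const.mul continuous_id).neg)).continuousAt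
  exact intervalIntegral.integral_hasDerivAt_right
    (integrable_gamma_pdf hα).intervalIntegrable
    ((stronglyMeasurable_gammaPDFReal α 1).stronglyMeasurableAtFilter) hc

lemma gammaCDF_nonneg (hα : 0 < α) (x : ℝ) : 0 ≤ gammaCDF α x :=
  setIntegral_nonneg measurableSet_Iic (fun t _ => gammaPDFReal_nonneg hα one_pos t)

lemma gammaCDF_le (hα : 0 < α) (x : ℝ) : gammaCDF α x ≤ ∫ t, gammaPDFReal α 1 t :=
  setIntegral_le_integral (integrable_gamma_pdf hα)
    (ae_of_all _ (gammaPDFReal_nonneg hα one_pos))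

lemma monotone_gammaCDF (hα : 0 < α) : Monotone (gammaCDF α) := fun x y hxy =>
  setIntegral_mono_set (integrable_gamma_pdf hα).integrableOn
    (ae_of_all _ (gammaPDFReal_nonneg hα one_pos))
    (HasSubset.Subset.eventuallyLE (Set.Iic_subset_Iic.mpr hxy))

lemma measurable_gammaCDF (hα : 0 < α) : Measurable (gammaCDF α) :=
  (monotone_gammaCDF hα).measurable

lemma gamma_pdf_pos_eq (hα : 0 < α) {y : ℝ} (hy : 0 ≤ y) :
    gammaPDFReal α 1 y = y ^ (α-1) * Real.exp (-(1*y)) / Real.Gamma α := by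
  rw [gammaPDFReal, if_pos hy, Real.one_rpow]
  ring

lemma z21 {z : ℝ} (hz : 0 < z) : z ^ (2*α-1) = z ^ (α-1) * z * z ^ (α-1) := by
  rw [show 2*α-1 = (α-1)+1+(α-1) by ring, Real.rpow_add hz, Real.rpow_add hz, Real.rpow_one]

lemma boundB (hα : 0 < α) {x z K : ℝ} (hz : 0 < z) (hx : 0 < x) (hxK : x ^ (α-1) ≤ K) :
    gammaPDFReal α 1 (x*z) * z * gammaPDFReal α 1 z
      ≤ K / (Real.Gamma α * Real.Gamma α) * (z ^ (2*α-1) * Real.exp (-(1*z))) := by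
  have hΓ : 0 < Real.Gamma α := Real.Gamma_pos_of_pos hα
  have hxz : (0:ℝ) < x * z := mul_pos hx hz
  rw [gamma_pdf_pos_eq hα hxz.le, gamma_pdf_pos_eq hα hz.le,
    Real.mul_rpow hx.le hz.le, z21 hz]
  have he : Real.exp (-(1*(x*z))) ≤ 1 := Real.exp_le_one_iff.mpr (by nlinarith)
  have h1 : x ^ (α-1) * z ^ (α-1) * Real.exp (-(1*(x*z))) ≤ K * z ^ (α-1) := by
    have a1 : x ^ (α-1) * z ^ (α-1) * Real.exp (-(1*(x*z))) ≤ x ^ (α-1) * z ^ (α-1) :=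
      mul_le_of_le_one_right (by positivity) he
    have a2 : x ^ (α-1) * z ^ (α-1) ≤ K * z ^ (α-1) :=
      mul_le_mul_of_nonneg_right hxK (Real.rpow_nonneg hz.le _)
    linarith
  calc x ^ (α-1) * z ^ (α-1) * Real.exp (-(1*(x*z))) / Real.Gamma α * z *
        (z ^ (α-1) * Real.exp (-(1*z)) / Real.Gamma α)
      ≤ K * z ^ (α-1) / Real.Gamma α * z * (z ^ (α-1) * Real.exp (-(1*z)) / Real.Gamma α) := by
        have hnn : (0:ℝ) ≤ z * (z ^ (α-1) * Real.exp (-(1*z)) / Real.Gamma α) / Real.Gamma α := by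
          positivity
        calc x ^ (α-1) * z ^ (α-1) * Real.exp (-(1*(x*z))) / Real.Gamma α * z *
              (z ^ (α-1) * Real.exp (-(1*z)) / Real.Gamma α)
            = (x ^ (α-1) * z ^ (α-1) * Real.exp (-(1*(x*z)))) *
              (z * (z ^ (α-1) * Real.exp (-(1*z)) / Real.Gamma α) / Real.Gamma α) := by ring
          _ ≤ (K * z ^ (α-1)) *
              (z * (z ^ (α-1) * Real.exp (-(1*z)) / Real.Gamma α) / Real.Gamma α) :=
            mul_le_mul_of_nonneg_right h1 hnn
          _ = K * z ^ (α-1) / Real.Gamma α * z * (z ^ (α-1) * Real.exp (-(1*z)) / Real.Gamma α) := by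
            ring
    _ = K / (Real.Gamma α * Real.Gamma α) * (z ^ (α-1) * z * z ^ (α-1) * Real.exp (-(1*z))) := by
        field_simp

lemma boundA (hα : 0 < α) {x z K' : ℝ} (hz : 0 < z) (hx : 1/2 ≤ x) (hxK : x ^ (1-α) ≤ K') :
    gammaPDFReal α 1 (z/x) * (z * (x^2)⁻¹) * gammaPDFReal α 1 z
      ≤ 4 * K' / (Real.Gamma α * Real.Gamma α) * (z ^ (2*α-1) * Real.exp (-(1*z))) := by
  have hΓ : 0 < Real.Gamma α := Real.Gamma_pos_of_pos hα
  have hx0 : (0:ℝ) < x := by linarith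
  have hK0 : 0 ≤ K' := le_trans (Real.rpow_nonneg hx0.le _) hxK
  rw [gamma_pdf_pos_eq hα (div_nonneg hz.le hx0.le), gamma_pdf_pos_eq hα hz.le,
    Real.div_rpow hz.le hx0.le, div_eq_mul_inv (z ^ (α-1)), ← Real.rpow_neg hx0.le,
    show -(α-1) = 1-α by ring, z21 hz]
  have he : Real.exp (-(1*(z/x))) ≤ 1 := Real.exp_le_one_iff.mpr (by
    have : 0 < z / x := div_pos hz hx0
    linarith)
  have ha : z ^ (α-1) * x ^ (1-α) * Real.exp (-(1*(z/x))) ≤ K' * z ^ (α-1) := by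
    have a1 : z ^ (α-1) * x ^ (1-α) * Real.exp (-(1*(z/x))) ≤ z ^ (α-1) * x ^ (1-α) :=
      mul_le_of_le_one_right (by positivity) he
    have a2 : z ^ (α-1) * x ^ (1-α) ≤ z ^ (α-1) * K' :=
      mul_le_mul_of_nonneg_left hxK (Real.rpow_nonneg hz.le _)
    nlinarith
  have hb : z * (x^2)⁻¹ ≤ 4 * z := by
    have h4 : (x^2)⁻¹ ≤ 4 := by
      have h1 : (4:ℝ)⁻¹ ≤ x^2 := by nlinarith
      calc (x^2)⁻¹ ≤ ((4:ℝ)⁻¹)⁻¹ := by gcongr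
        _ = 4 := by norm_num
    nlinarith [sq_nonneg x]
  have key : (z ^ (α-1) * x ^ (1-α) * Real.exp (-(1*(z/x)))) * (z * (x^2)⁻¹)
      ≤ (K' * z ^ (α-1)) * (4 * z) :=
    mul_le_mul ha hb (by positivity) (by positivity)
  calc z ^ (α-1) * x ^ (1-α) * Real.exp (-(1*(z/x))) / Real.Gamma α * (z * (x^2)⁻¹) *
        (z ^ (α-1) * Real.exp (-(1*z)) / Real.Gamma α)
      = ((z ^ (α-1) * x ^ (1-α) * Real.exp (-(1*(z/x)))) * (z * (x^2)⁻¹)) *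
        (z ^ (α-1) * Real.exp (-(1*z)) / (Real.Gamma α * Real.Gamma α)) := by ring
    _ ≤ ((K' * z ^ (α-1)) * (4 * z)) *
        (z ^ (α-1) * Real.exp (-(1*z)) / (Real.Gamma α * Real.Gamma α)) :=
      mul_le_mul_of_nonneg_right key (by positivity)
    _ = 4 * K' / (Real.Gamma α * Real.Gamma α) *
        (z ^ (α-1) * z * z ^ (α-1) * Real.exp (-(1*z))) := by ring

lemma derivB (hα : 0 < α) {μ₀ : ℝ} (hμ : 1 ≤ μ₀) :
    HasDerivAt (fun x => ∫ z in Ioi (0:ℝ), Real.log z * gammaCDF α (x * z) * gammaPDFReal α 1 z)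
      (∫ z in Ioi (0:ℝ), Real.log z * (gammaPDFReal α 1 (μ₀ * z) * z) * gammaPDFReal α 1 z)
      μ₀ := by
  have hΓ : 0 < Real.Gamma α := Real.Gamma_pos_of_pos hα
  set K : ℝ := max ((1/2:ℝ) ^ (α-1)) ((μ₀+1/2) ^ (α-1)) with hK
  set T : ℝ := ∫ t, gammaPDFReal α 1 t with hT
  have h := hasDerivAt_integral_of_dominated_loc_of_deriv_le
    (F := fun x z => Real.log z * gammaCDF α (x * z) * gammaPDFReal α 1 z)
    (F' := fun x z => Real.log z * (gammaPDFReal α 1 (x * z) * z) * gammaPDFReal α 1 z)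
    (x₀ := μ₀)
    (bound := fun z => K / (Real.Gamma α * Real.Gamma α) *
      (|Real.log z| * z ^ (2*α-1) * Real.exp (-(1*z))))
    (μ := volume.restrict (Ioi 0)) (s := Metric.ball μ₀ (1/2)) (Metric.ball_mem_nhds μ₀ (by norm_num))
    ?_ ?_ ?_ ?_ ?_ ?_
  · exact h.2
  · refine Filter.Eventually.of_forall (fun x => Measurable.aestronglyMeasurable ?_)
    exact (Real.measurable_log.mul
      ((measurable_gammaCDF hα).comp (measurable_id.const_mul x))).mul
      (measurable_gammaPDFReal α 1)
  · refine Integrable.mono'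
      ((int_log (t := α-1) (by linarith) one_pos).const_mul (T / Real.Gamma α)) ?_ ?_
    · apply Measurable.aestronglyMeasurable
      exact (Real.measurable_log.mul
        ((measurable_gammaCDF hα).comp (measurable_id.const_mul μ₀))).mul
        (measurable_gammaPDFReal α 1)
    · filter_upwards [ae_restrict_mem measurableSet_Ioi] with z hz
      have hz0 : (0:ℝ) < z := hz
      rw [Real.norm_eq_abs, abs_mul, abs_mul, abs_of_nonneg (gammaCDF_nonneg hα _),
        abs_of_nonneg (gammaPDFReal_nonneg hα one_pos z)]
      calc |Real.log z| * gammaCDF α (μ₀ * z) * gammaPDFReal α 1 z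
          ≤ |Real.log z| * T * gammaPDFReal α 1 z := by
            refine mul_le_mul_of_nonneg_right ?_ (gammaPDFReal_nonneg hα one_pos z)
            exact mul_le_mul_of_nonneg_left (gammaCDF_le hα _) (abs_nonneg _)
        _ = T / Real.Gamma α * (|Real.log z| * z ^ (α-1) * Real.exp (-(1*z))) := by
            rw [gamma_pdf_pos_eq hα hz0.le]; ring
  · apply Measurable.aestronglyMeasurable
    exact (Real.measurable_log.mul
      (((measurable_gammaPDFReal α 1).comp (measurable_id.const_mul μ₀)).mul measurable_id)).mul
      (measurable_gammaPDFReal α 1)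
  · filter_upwards [ae_restrict_mem measurableSet_Ioi] with z hz x hxball
    have hz0 : (0:ℝ) < z := hz
    rw [Metric.mem_ball, Real.dist_eq] at hxball
    have hxb := abs_lt.mp hxball
    have hx1 : (1/2:ℝ) ≤ x := by linarith [hxb.1]
    have hx2 : x ≤ μ₀ + 1/2 := by linarith [hxb.2]
    have hx0 : (0:ℝ) < x := by linarith
    have hxK : x ^ (α-1) ≤ K := by
      rcases le_or_gt 0 (α-1) with h1 | h1
      · exact le_trans (Real.rpow_le_rpow hx0.le hx2 h1) (le_max_right _ _)
      · exact le_trans (Real.rpow_le_rpow_of_nonpos (by norm_num) hx1 h1.le) (le_max_left _ _)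
    rw [Real.norm_eq_abs, abs_mul, abs_mul,
      abs_of_nonneg (mul_nonneg (gammaPDFReal_nonneg hα one_pos _) hz0.le),
      abs_of_nonneg (gammaPDFReal_nonneg hα one_pos z)]
    calc |Real.log z| * (gammaPDFReal α 1 (x * z) * z) * gammaPDFReal α 1 z
        = |Real.log z| * (gammaPDFReal α 1 (x * z) * z * gammaPDFReal α 1 z) := by ring
      _ ≤ |Real.log z| * (K / (Real.Gamma α * Real.Gamma α) *
            (z ^ (2*α-1) * Real.exp (-(1*z)))) :=
          mul_le_mul_of_nonneg_left (boundB hα hz0 hx0 hxK) (abs_nonneg _)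
      _ = K / (Real.Gamma α * Real.Gamma α) *
            (|Real.log z| * z ^ (2*α-1) * Real.exp (-(1*z))) := by ring
  · exact (int_log (t := 2*α-1) (by linarith) one_pos).const_mul _
  · filter_upwards [ae_restrict_mem measurableSet_Ioi] with z hz x hxball
    have hz0 : (0:ℝ) < z := hz
    rw [Metric.mem_ball, Real.dist_eq] at hxball
    have hxb := abs_lt.mp hxball
    have hx0 : (0:ℝ) < x := by linarith [hxb.1]
    have hxz : (0:ℝ) < x * z := mul_pos hx0 hz0
    have h1 : HasDerivAt (fun u : ℝ => u * z) z x := by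
      simpa using hasDerivAt_mul_const (c := z) (x := x)
    have h2 := (hasDerivAt_gammaCDF hα hxz).comp x h1
    have h3 := (h2.const_mul (Real.log z)).mul_const (gammaPDFReal α 1 z)
    simpa [Function.comp] using h3

lemma derivA (hα : 0 < α) {μ₀ : ℝ} (hμ : 1 ≤ μ₀) :
    HasDerivAt (fun x => ∫ z in Ioi (0:ℝ), Real.log z * gammaCDF α (z / x) * gammaPDFReal α 1 z)
      (∫ z in Ioi (0:ℝ),
        Real.log z * (gammaPDFReal α 1 (z / μ₀) * (z * -(μ₀^2)⁻¹)) * gammaPDFReal α 1 z)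
      μ₀ := by
  have hΓ : 0 < Real.Gamma α := Real.Gamma_pos_of_pos hα
  set K : ℝ := max ((1/2:ℝ) ^ (1-α)) ((μ₀+1/2) ^ (1-α)) with hK
  set T : ℝ := ∫ t, gammaPDFReal α 1 t with hT
  have h := hasDerivAt_integral_of_dominated_loc_of_deriv_le
    (F := fun x z => Real.log z * gammaCDF α (z / x) * gammaPDFReal α 1 z)
    (F' := fun x z =>
      Real.log z * (gammaPDFReal α 1 (z / x) * (z * -(x^2)⁻¹)) * gammaPDFReal α 1 z)
    (x₀ := μ₀)
    (bound := fun z => 4 * K / (Real.Gamma α * Real.Gamma α) *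
      (|Real.log z| * z ^ (2*α-1) * Real.exp (-(1*z))))
    (μ := volume.restrict (Ioi 0)) (s := Metric.ball μ₀ (1/2)) (Metric.ball_mem_nhds μ₀ (by norm_num))
    ?_ ?_ ?_ ?_ ?_ ?_
  · exact h.2
  · refine Filter.Eventually.of_forall (fun x => Measurable.aestronglyMeasurable ?_)
    exact (Real.measurable_log.mul
      ((measurable_gammaCDF hα).comp (measurable_id.div_const x))).mul
      (measurable_gammaPDFReal α 1)
  · refine Integrable.mono'
      ((int_log (t := α-1) (by linarith) one_pos).const_mul (T / Real.Gamma α)) ?_ ?_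
    · apply Measurable.aestronglyMeasurable
      exact (Real.measurable_log.mul
        ((measurable_gammaCDF hα).comp (measurable_id.div_const μ₀))).mul
        (measurable_gammaPDFReal α 1)
    · filter_upwards [ae_restrict_mem measurableSet_Ioi] with z hz
      have hz0 : (0:ℝ) < z := hz
      rw [Real.norm_eq_abs, abs_mul, abs_mul, abs_of_nonneg (gammaCDF_nonneg hα _),
        abs_of_nonneg (gammaPDFReal_nonneg hα one_pos z)]
      calc |Real.log z| * gammaCDF α (z / μ₀) * gammaPDFReal α 1 z
          ≤ |Real.log z| * T * gammaPDFReal α 1 z := by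
            refine mul_le_mul_of_nonneg_right ?_ (gammaPDFReal_nonneg hα one_pos z)
            exact mul_le_mul_of_nonneg_left (gammaCDF_le hα _) (abs_nonneg _)
        _ = T / Real.Gamma α * (|Real.log z| * z ^ (α-1) * Real.exp (-(1*z))) := by
            rw [gamma_pdf_pos_eq hα hz0.le]; ring
  · apply Measurable.aestronglyMeasurable
    exact (Real.measurable_log.mul
      (((measurable_gammaPDFReal α 1).comp (measurable_id.div_const μ₀)).mul
        (measurable_id.mul_const _))).mul
      (measurable_gammaPDFReal α 1)
  · filter_upwards [ae_restrict_mem measurableSet_Ioi] with z hz x hxball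
    have hz0 : (0:ℝ) < z := hz
    rw [Metric.mem_ball, Real.dist_eq] at hxball
    have hxb := abs_lt.mp hxball
    have hx1 : (1/2:ℝ) ≤ x := by linarith [hxb.1]
    have hx2 : x ≤ μ₀ + 1/2 := by linarith [hxb.2]
    have hx0 : (0:ℝ) < x := by linarith
    have hxK : x ^ (1-α) ≤ K := by
      rcases le_or_gt 0 (1-α) with h1 | h1
      · exact le_trans (Real.rpow_le_rpow hx0.le hx2 h1) (le_max_right _ _)
      · exact le_trans (Real.rpow_le_rpow_of_nonpos (by norm_num) hx1 h1.le) (le_max_left _ _)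
    rw [Real.norm_eq_abs, abs_mul, abs_mul]
    have habs2 : |gammaPDFReal α 1 (z / x) * (z * -(x^2)⁻¹)|
        = gammaPDFReal α 1 (z / x) * (z * (x^2)⁻¹) := by
      rw [abs_mul, abs_of_nonneg (gammaPDFReal_nonneg hα one_pos _), abs_mul, abs_neg,
        abs_of_nonneg hz0.le, abs_of_nonneg (by positivity : (0:ℝ) ≤ (x^2)⁻¹)]
    rw [habs2, abs_of_nonneg (gammaPDFReal_nonneg hα one_pos z)]
    calc |Real.log z| * (gammaPDFReal α 1 (z / x) * (z * (x^2)⁻¹)) * gammaPDFReal α 1 z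
        = |Real.log z| * (gammaPDFReal α 1 (z / x) * (z * (x^2)⁻¹) * gammaPDFReal α 1 z) := by
          ring
      _ ≤ |Real.log z| * (4 * K / (Real.Gamma α * Real.Gamma α) *
            (z ^ (2*α-1) * Real.exp (-(1*z)))) :=
          mul_le_mul_of_nonneg_left (boundA hα hz0 hx1 hxK) (abs_nonneg _)
      _ = 4 * K / (Real.Gamma α * Real.Gamma α) *
            (|Real.log z| * z ^ (2*α-1) * Real.exp (-(1*z))) := by ring
  · exact (int_log (t := 2*α-1) (by linarith) one_pos).const_mul _
  · filter_upwards [ae_restrict_mem measurableSet_Ioi] with z hz x hxball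
    have hz0 : (0:ℝ) < z := hz
    rw [Metric.mem_ball, Real.dist_eq] at hxball
    have hxb := abs_lt.mp hxball
    have hx0 : (0:ℝ) < x := by linarith [hxb.1]
    have hzx : (0:ℝ) < z / x := div_pos hz0 hx0
    have h1 : HasDerivAt (fun u : ℝ => z / u) (z * -(x^2)⁻¹) x := by
      simpa [div_eq_mul_inv] using (hasDerivAt_inv hx0.ne').const_mul z
    have h2 := (hasDerivAt_gammaCDF hα hzx).comp x h1
    have h3 := (h2.const_mul (Real.log z)).mul_const (gammaPDFReal α 1 z)
    simpa [Function.comp] using h3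

lemma evalB (hα : 0 < α) {μ₀ : ℝ} (hμ0 : 0 < μ₀) :
    ∫ z in Ioi (0:ℝ), Real.log z * (gammaPDFReal α 1 (μ₀ * z) * z) * gammaPDFReal α 1 z
      = μ₀ ^ (α-1) / (Real.Gamma α * Real.Gamma α) *
        ((1+μ₀) ^ (-(2*α)) *
          ((∫ z in Ioi (0:ℝ), Real.log z * z ^ (2*α-1) * Real.exp (-z))
            - Real.log (1+μ₀) * Real.Gamma (2*α))) := by
  have hb : (0:ℝ) < 1 + μ₀ := by linarith
  have key : ∀ z ∈ Ioi (0:ℝ),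
      Real.log z * (gammaPDFReal α 1 (μ₀ * z) * z) * gammaPDFReal α 1 z
        = μ₀ ^ (α-1) / (Real.Gamma α * Real.Gamma α) *
          (Real.log z * z ^ (2*α-1) * Real.exp (-((1+μ₀)*z))) := by
    intro z hz
    have hz0 : (0:ℝ) < z := hz
    rw [gamma_pdf_pos_eq hα (mul_pos hμ0 hz0).le, gamma_pdf_pos_eq hα hz0.le,
      Real.mul_rpow hμ0.le hz0.le, z21 hz0,
      show -((1+μ₀)*z) = -(1*(μ₀*z)) + -(1*z) by ring, Real.exp_add]
    field_simp
  rw [setIntegral_congr_fun measurableSet_Ioi key, integral_const_mul,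
    I_eval (by linarith : (0:ℝ) < 2*α) hb]

lemma rpow_neg_alpha_succ {μ₀ : ℝ} (hμ0 : 0 < μ₀) :
    μ₀ ^ (-(α+1)) = (μ₀ ^ (α-1))⁻¹ * ((μ₀:ℝ)^2)⁻¹ := by
  have h2 : (μ₀:ℝ)^2 = μ₀ ^ (2:ℝ) := by
    rw [show (2:ℝ) = ((2:ℕ):ℝ) by norm_num, Real.rpow_natCast]
  rw [show -(α+1) = -(α-1) + (-2:ℝ) by ring, Real.rpow_add hμ0, Real.rpow_neg hμ0.le,
    Real.rpow_neg hμ0.le, h2]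

lemma evalA (hα : 0 < α) {μ₀ : ℝ} (hμ0 : 0 < μ₀) :
    ∫ z in Ioi (0:ℝ),
        Real.log z * (gammaPDFReal α 1 (z / μ₀) * (z * -(μ₀^2)⁻¹)) * gammaPDFReal α 1 z
      = -(μ₀ ^ (-(α+1)) / (Real.Gamma α * Real.Gamma α)) *
        (((1+μ₀)/μ₀) ^ (-(2*α)) *
          ((∫ z in Ioi (0:ℝ), Real.log z * z ^ (2*α-1) * Real.exp (-z))
            - Real.log ((1+μ₀)/μ₀) * Real.Gamma (2*α))) := by
  have hΓ : 0 < Real.Gamma α := Real.Gamma_pos_of_pos hα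
  have hb : (0:ℝ) < (1+μ₀)/μ₀ := by positivity
  have key : ∀ z ∈ Ioi (0:ℝ),
      Real.log z * (gammaPDFReal α 1 (z / μ₀) * (z * -(μ₀^2)⁻¹)) * gammaPDFReal α 1 z
        = -(μ₀ ^ (-(α+1)) / (Real.Gamma α * Real.Gamma α)) *
          (Real.log z * z ^ (2*α-1) * Real.exp (-(((1+μ₀)/μ₀)*z))) := by
    intro z hz
    have hz0 : (0:ℝ) < z := hz
    have hm : (0:ℝ) < μ₀ ^ (α-1) := Real.rpow_pos_of_pos hμ0 _
    rw [gamma_pdf_pos_eq hα (div_pos hz0 hμ0).le, gamma_pdf_pos_eq hα hz0.le,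
      Real.div_rpow hz0.le hμ0.le, z21 hz0, rpow_neg_alpha_succ hμ0,
      show -(((1+μ₀)/μ₀)*z) = -(1*(z/μ₀)) + -(1*z) by field_simp; ring, Real.exp_add]
    field_simp
  rw [setIntegral_congr_fun measurableSet_Ioi key, integral_const_mul,
    I_eval (by linarith : (0:ℝ) < 2*α) hb]

lemma final_algebra (hα : 0 < α) {μ L : ℝ} (hμ : 1 ≤ μ) :
    -(μ ^ (-(α+1)) / (Real.Gamma α * Real.Gamma α)) *
        (((1+μ)/μ) ^ (-(2*α)) * (L - Real.log ((1+μ)/μ) * Real.Gamma (2*α)))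
      + μ ^ (α-1) / (Real.Gamma α * Real.Gamma α) *
        ((1+μ) ^ (-(2*α)) * (L - Real.log (1+μ) * Real.Gamma (2*α)))
    = -(Real.Gamma (2 * α) * μ ^ (α - 1) * Real.log μ)
        / (Real.Gamma α ^ 2 * (1 + μ) ^ (2 * α)) := by
  have hμ0 : (0:ℝ) < μ := by linarith
  have hb : (0:ℝ) < 1 + μ := by linarith
  have hΓ : (0:ℝ) < Real.Gamma α := Real.Gamma_pos_of_pos hα
  have f1 : ((1+μ)/μ) ^ (-(2*α)) = (1+μ) ^ (-(2*α)) * μ ^ (2*α) := by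
    rw [Real.div_rpow hb.le hμ0.le, Real.rpow_neg hμ0.le (2*α), div_eq_mul_inv, inv_inv]
  have f3 : Real.log ((1+μ)/μ) = Real.log (1+μ) - Real.log μ := Real.log_div hb.ne' hμ0.ne'
  have hQ : μ ^ (-(α+1)) = μ ^ (α-1) * (μ ^ (2*α))⁻¹ := by
    rw [show -(α+1) = (α-1) + (-(2*α)) by ring, Real.rpow_add hμ0, Real.rpow_neg hμ0.le]
  have f4 : (1+μ) ^ (-(2*α)) = ((1+μ) ^ (2*α))⁻¹ := Real.rpow_neg hb.le _
  rw [f1, f3, hQ, f4]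
  have hR : μ ^ (2*α) ≠ 0 := (Real.rpow_pos_of_pos hμ0 _).ne'
  have hS : (1+μ) ^ (2*α) ≠ 0 := (Real.rpow_pos_of_pos hb _).ne'
  have hS' : (1 + μ : ℝ) ^ (2 * α) ≠ 0 := hS
  field_simp
  ring


/-- For all μ ≥ 1, (c*)'(μ) = -Γ(2α) μ^(α-1) ln μ / (Γ(α)² (1+μ)^(2α)) ≤ 0; in particular
    c* is nonincreasing on [1,∞). -/
theorem cstarW_deriv (α : ℝ) (hα : 0 < α) :
    (∀ μ : ℝ, 1 ≤ μ →
      HasDerivAt (cstarW α)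
        (-(Real.Gamma (2 * α) * μ ^ (α - 1) * Real.log μ)
          / (Real.Gamma α ^ 2 * (1 + μ) ^ (2 * α))) μ ∧
      -(Real.Gamma (2 * α) * μ ^ (α - 1) * Real.log μ)
          / (Real.Gamma α ^ 2 * (1 + μ) ^ (2 * α)) ≤ 0) ∧
    AntitoneOn (cstarW α) (Set.Ici 1) := by
  have hkey : ∀ μ : ℝ, 1 ≤ μ →
      HasDerivAt (cstarW α)
        (-(Real.Gamma (2 * α) * μ ^ (α - 1) * Real.log μ)
          / (Real.Gamma α ^ 2 * (1 + μ) ^ (2 * α))) μ := by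
    intro μ hμ
    have hμ0 : (0:ℝ) < μ := lt_of_lt_of_le one_pos hμ
    have htot := (derivA hα hμ).add (derivB hα hμ)
    rw [evalA hα hμ0, evalB hα hμ0, final_algebra hα hμ] at htot
    exact htot
  have hsign : ∀ μ : ℝ, 1 ≤ μ →
      -(Real.Gamma (2 * α) * μ ^ (α - 1) * Real.log μ)
          / (Real.Gamma α ^ 2 * (1 + μ) ^ (2 * α)) ≤ 0 := by
    intro μ hμ
    apply div_nonpos_of_nonpos_of_nonneg
    · refine neg_nonpos_of_nonneg (mul_nonneg (mul_nonneg ?_ ?_) (Real.log_nonneg hμ))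
      · exact (Real.Gamma_pos_of_pos (by linarith)).le
      · exact (Real.rpow_pos_of_pos (by linarith) _).le
    · have : (0:ℝ) < 1 + μ := by linarith
      positivity
  refine ⟨fun μ hμ => ⟨hkey μ hμ, hsign μ hμ⟩, ?_⟩
  apply antitoneOn_of_deriv_nonpos (convex_Ici 1)
  · exact fun x hx => (hkey x hx).continuousAt.continuousWithinAt
  · intro x hx
    rw [interior_Ici] at hx
    exact (hkey x (le_of_lt hx)).differentiableAt.differentiableWithinAt
  · intro x hx
    rw [interior_Ici] at hx
    rw [(hkey x (le_of_lt hx)).deriv]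
    exact hsign x (le_of_lt hx)
end

section
/- Let X₁, X₂ be independent with X_i ~ Gamma(α, θ_i), θ_i > 0, α > 0. Let Z₂ = max{X₁, X₂}, H_S(θ) = ln θ₁ · 1{X₁ ≥ X₂} + ln θ₂ · 1{X₁ < X₂}, and μ = max{θ₁,θ₂}/min{θ₁,θ₂}. Then E[ln Z₂ − H_S(θ)] = ∫₀^∞ ln(z) G_α(z/μ) g_α(z) dz + ∫₀^∞ ln(z) G_α(μz) g_α(z) dz, where G_α and g_α are the cdf and pdf of Gamma(α,1). -/
open MeasureTheory ProbabilityTheory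

section Helpers
open scoped ENNReal NNReal
open Real Set

lemma abs_log_le_s10 {x ε : ℝ} (hx : 0 < x) (hε : 0 < ε) :
    |Real.log x| ≤ (x ^ ε + x ^ (-ε)) / ε := by
  have key : ∀ y : ℝ, 0 < y → Real.log y ≤ y ^ ε / ε := by
    intro y hy
    have h1 : Real.log (y ^ ε) ≤ y ^ ε - 1 := Real.log_le_sub_one_of_pos (rpow_pos_of_pos hy ε)
    rw [Real.log_rpow hy] at h1
    have : ε * Real.log y ≤ y ^ ε := by nlinarith [rpow_pos_of_pos hy ε]
    calc Real.log y = ε * Real.log y / ε := by field_simp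
    _ ≤ y ^ ε / ε := by gcongr
  have hpε : (0:ℝ) ≤ x ^ ε / ε := by positivity
  have hnε : (0:ℝ) ≤ x ^ (-ε) / ε := by positivity
  rcases abs_cases (Real.log x) with ⟨h, _⟩ | ⟨h, _⟩
  · rw [h]
    calc Real.log x ≤ x ^ ε / ε := key x hx
    _ ≤ (x ^ ε + x ^ (-ε)) / ε := by rw [add_div]; linarith
  · rw [h]
    have := key x⁻¹ (inv_pos.mpr hx)
    rw [Real.log_inv, Real.inv_rpow hx.le, ← Real.rpow_neg hx.le] at this
    calc -Real.log x ≤ x ^ (-ε) / ε := this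
    _ ≤ (x ^ ε + x ^ (-ε)) / ε := by rw [add_div]; linarith

lemma integrable_log_mul_gammaPDFReal {α : ℝ} (hα : 0 < α) :
    Integrable (fun x => Real.log x * gammaPDFReal α 1 x) := by
  have hzero : ∀ x ∈ Iic (0:ℝ), Real.log x * gammaPDFReal α 1 x = 0 := by
    intro x hx
    rcases lt_or_eq_of_le (mem_Iic.mp hx) with h | h
    · simp [gammaPDFReal, not_le.mpr h]
    · simp [h]
  have hmeas : AEStronglyMeasurable (fun x => Real.log x * gammaPDFReal α 1 x) volume :=
    (Real.measurable_log.mul (measurable_gammaPDFReal α 1)).aestronglyMeasurable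
  rw [← integrableOn_univ, ← Iic_union_Ioi (a := (0:ℝ)), integrableOn_union]
  constructor
  · exact (integrableOn_congr_fun hzero measurableSet_Iic).mpr (integrableOn_zero)
  · -- dominate on Ioi 0
    set ε := α / 2 with hε
    have hε0 : 0 < ε := by positivity
    have hΓ : 0 < Real.Gamma α := Real.Gamma_pos_of_pos hα
    have hint1 : IntegrableOn (fun x => Real.exp (-x) * x ^ (α + ε - 1)) (Ioi 0) :=
      Real.GammaIntegral_convergent (by linarith)
    have hint2 : IntegrableOn (fun x => Real.exp (-x) * x ^ (α - ε - 1)) (Ioi 0) :=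
      Real.GammaIntegral_convergent (by linarith)
    have hdom : IntegrableOn (fun x => (1 / (ε * Real.Gamma α)) *
        (Real.exp (-x) * x ^ (α + ε - 1) + Real.exp (-x) * x ^ (α - ε - 1))) (Ioi 0) :=
      (hint1.add hint2).const_mul _
    refine Integrable.mono' hdom hmeas.restrict ?_
    filter_upwards [ae_restrict_mem measurableSet_Ioi] with x hx
    have hx0 : 0 < x := hx
    rw [norm_mul, Real.norm_eq_abs, Real.norm_eq_abs]
    have hpdf : |gammaPDFReal α 1 x| = 1 / Real.Gamma α * (x ^ (α - 1) * Real.exp (-x)) := by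
      rw [abs_of_nonneg (gammaPDFReal_nonneg hα one_pos x)]
      simp [gammaPDFReal, hx0.le, Real.one_rpow, mul_assoc, one_mul]
    rw [hpdf]
    have hlog := abs_log_le_s10 hx0 hε0
    have h1 : x ^ ε * x ^ (α - 1) = x ^ (α + ε - 1) := by
      rw [← Real.rpow_add hx0]; ring_nf
    have h2 : x ^ (-ε) * x ^ (α - 1) = x ^ (α - ε - 1) := by
      rw [← Real.rpow_add hx0]; ring_nf
    have hnn : (0:ℝ) ≤ x ^ (α - 1) * Real.exp (-x) := by positivity
    calc |Real.log x| * (1 / Real.Gamma α * (x ^ (α - 1) * Real.exp (-x)))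
        ≤ ((x ^ ε + x ^ (-ε)) / ε) * (1 / Real.Gamma α * (x ^ (α - 1) * Real.exp (-x))) := by
          apply mul_le_mul_of_nonneg_right hlog; positivity
      _ = (1 / (ε * Real.Gamma α)) *
          (Real.exp (-x) * x ^ (α + ε - 1) + Real.exp (-x) * x ^ (α - ε - 1)) := by
          rw [← h1, ← h2]; field_simp

lemma measurable_gammaPDF' (a r : ℝ) : Measurable (gammaPDF a r) :=
  (measurable_gammaPDFReal a r).ennreal_ofReal

lemma integrable_log_gammaMeasure {α : ℝ} (hα : 0 < α) :
    Integrable Real.log (gammaMeasure α 1) := by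
  rw [gammaMeasure, integrable_withDensity_iff (measurable_gammaPDF' α 1)
    (ae_of_all _ fun x => ENNReal.ofReal_lt_top)]
  apply (integrable_log_mul_gammaPDFReal hα).congr
  filter_upwards with x
  rw [gammaPDF, ENNReal.toReal_ofReal (gammaPDFReal_nonneg hα one_pos x)]

lemma gammaPDF_scale {α r c : ℝ} (hr : 0 < r) (hc : 0 < c) (x : ℝ) :
    ENNReal.ofReal c * gammaPDF α (r / c) (c * x) = gammaPDF α r x := by
  rw [gammaPDF_eq, gammaPDF_eq, ← ENNReal.ofReal_mul hc.le]
  congr 1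
  rcases le_or_gt 0 x with hx | hx
  · rw [if_pos (by positivity), if_pos hx]
    rw [Real.mul_rpow hc.le hx, Real.div_rpow hr.le hc.le]
    have hca : (0:ℝ) < c ^ α := Real.rpow_pos_of_pos hc α
    have h1 : c * (c ^ (α - 1)) = c ^ α := by
      rw [Real.rpow_sub hc, Real.rpow_one]; field_simp
    have h2 : r / c * (c * x) = r * x := by field_simp
    rw [h2]
    have h3 : c * (r ^ α / c ^ α / Real.Gamma α * (c ^ (α - 1) * x ^ (α - 1)) *
        Real.exp (-(r * x))) = (c * c ^ (α - 1) / c ^ α) *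
        (r ^ α / Real.Gamma α * x ^ (α - 1) * Real.exp (-(r * x))) := by ring
    rw [h3, h1, div_self hca.ne', one_mul]
  · rw [if_neg (by nlinarith), if_neg (not_le.mpr hx), mul_zero]

lemma gammaMeasure_map {α r c : ℝ} (hr : 0 < r) (hc : 0 < c) :
    Measure.map (fun x => c * x) (gammaMeasure α r) = gammaMeasure α (r / c) := by
  ext s hs
  rw [Measure.map_apply (measurable_const_mul c) hs, gammaMeasure, gammaMeasure,
    withDensity_apply _ (hs.preimage (measurable_const_mul c)), withDensity_apply _ hs]
  calc ∫⁻ x in (fun x => c * x) ⁻¹' s, gammaPDF α r x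
      = ∫⁻ x in (fun x => c * x) ⁻¹' s, ENNReal.ofReal c * gammaPDF α (r / c) (c * x) := by
        simp_rw [gammaPDF_scale hr hc]
    _ = ENNReal.ofReal c * ∫⁻ x in (fun x => c * x) ⁻¹' s, gammaPDF α (r / c) (c * x) :=
        lintegral_const_mul _ ((measurable_gammaPDF' _ _).comp (measurable_const_mul c))
    _ = ENNReal.ofReal c * ∫⁻ y in s, gammaPDF α (r / c) y ∂(Measure.map (fun x => c * x) volume) := by
        rw [setLIntegral_map hs (measurable_gammaPDF' _ _) (measurable_const_mul c)]
    _ = ∫⁻ y in s, gammaPDF α (r / c) y := by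
        rw [Real.map_volume_mul_left hc.ne', Measure.restrict_smul, lintegral_smul_measure,
          smul_eq_mul, ← mul_assoc, abs_of_pos (inv_pos.mpr hc), ← ENNReal.ofReal_mul hc.le,
          mul_inv_cancel₀ hc.ne', ENNReal.ofReal_one, one_mul]

lemma gammaMeasure_ae_pos {α r : ℝ} (hr : 0 < r) : ∀ᵐ x ∂(gammaMeasure α r), 0 < x := by
  rw [ae_iff]
  have h : {x : ℝ | ¬ 0 < x} = Iic 0 := by ext x; simp
  rw [h, gammaMeasure, withDensity_apply _ measurableSet_Iic]
  rw [show (Iic (0:ℝ)) = Iio 0 ∪ {0} by ext x; simp [le_iff_lt_or_eq]]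
  have hdisj : Disjoint (Iio (0:ℝ)) {0} := by
    simp only [Set.disjoint_singleton_right, mem_Iio]; exact lt_irrefl 0
  rw [lintegral_union (measurableSet_singleton 0) hdisj]
  have h1 : ∫⁻ x in Iio (0:ℝ), gammaPDF α r x = 0 := lintegral_gammaPDF_of_nonpos le_rfl
  have h2 : ∫⁻ x in ({0} : Set ℝ), gammaPDF α r x = 0 := by
    rw [Measure.restrict_eq_zero.mpr (by simp), lintegral_zero_measure]
  rw [h1, h2, add_zero]

lemma gammaMeasure_Iic_toReal {α : ℝ} (hα : 0 < α) (c : ℝ) :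
    (gammaMeasure α 1 (Iic c)).toReal = ∫ t in Iic c, gammaPDFReal α 1 t := by
  have : IsProbabilityMeasure (gammaMeasure α 1) := isProbabilityMeasure_gammaMeasure hα one_pos
  rw [← measureReal_def, ← cdf_eq_real, cdf_gammaMeasure_eq_integral hα one_pos]

lemma gammaMeasure_Iio_eq_Iic {α : ℝ} (c : ℝ) :
    gammaMeasure α 1 (Iio c) = gammaMeasure α 1 (Iic c) := by
  rw [gammaMeasure, withDensity_apply _ measurableSet_Iio, withDensity_apply _ measurableSet_Iic]
  exact setLIntegral_congr Iio_ae_eq_Iic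

lemma integral_gammaMeasure {α : ℝ} (hα : 0 < α) (g : ℝ → ℝ) :
    ∫ x, g x ∂(gammaMeasure α 1) = ∫ x, g x * gammaPDFReal α 1 x := by
  have hm : Measurable (fun x => Real.toNNReal (gammaPDFReal α 1 x)) :=
    (measurable_gammaPDFReal α 1).real_toNNReal
  have hd : gammaMeasure α 1 = volume.withDensity
      (fun x => ((Real.toNNReal (gammaPDFReal α 1 x) : ℝ≥0) : ℝ≥0∞)) := rfl
  rw [hd, integral_withDensity_eq_integral_smul hm]
  congr 1; funext x
  rw [NNReal.smul_def, smul_eq_mul, Real.coe_toNNReal _ (gammaPDFReal_nonneg hα one_pos x), mul_comm]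

lemma key_integral {α a b : ℝ} (hα : 0 < α) (ha : 0 < a) (hb : 0 < b) :
    ∫ p : ℝ × ℝ, (if b * p.2 ≤ a * p.1 then Real.log p.1 else Real.log p.2)
      ∂((gammaMeasure α 1).prod (gammaMeasure α 1)) =
    (∫ z in Ioi (0:ℝ), Real.log z * gammaCDF α (a / b * z) * gammaPDFReal α 1 z) +
    (∫ z in Ioi (0:ℝ), Real.log z * gammaCDF α (b / a * z) * gammaPDFReal α 1 z) := by
  have : IsProbabilityMeasure (gammaMeasure α 1) := isProbabilityMeasure_gammaMeasure hα one_pos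
  set γ := gammaMeasure α 1 with hγ
  set A : ℝ × ℝ → ℝ := fun p => if b * p.2 ≤ a * p.1 then Real.log p.1 else 0 with hA
  set B : ℝ × ℝ → ℝ := fun p => if b * p.2 ≤ a * p.1 then 0 else Real.log p.2 with hB
  have hsetm : MeasurableSet {p : ℝ × ℝ | b * p.2 ≤ a * p.1} :=
    measurableSet_le (measurable_snd.const_mul b) (measurable_fst.const_mul a)
  have hmA : Measurable A := Measurable.ite hsetm
    (Real.measurable_log.comp measurable_fst) measurable_const
  have hmB : Measurable B := Measurable.ite hsetm measurable_const
    (Real.measurable_log.comp measurable_snd)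
  -- integrability of log of each coordinate
  have hlog1 : Integrable (fun p : ℝ × ℝ => Real.log p.1) (γ.prod γ) := by
    have h : Integrable Real.log ((γ.prod γ).fst) := by
      rw [Measure.fst_prod]; exact integrable_log_gammaMeasure hα
    rw [Measure.fst] at h
    exact (integrable_map_measure Real.measurable_log.aestronglyMeasurable
      measurable_fst.aemeasurable).mp h
  have hlog2 : Integrable (fun p : ℝ × ℝ => Real.log p.2) (γ.prod γ) := by
    have h : Integrable Real.log ((γ.prod γ).snd) := by
      rw [Measure.snd_prod]; exact integrable_log_gammaMeasure hα
    rw [Measure.snd] at h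
    exact (integrable_map_measure Real.measurable_log.aestronglyMeasurable
      measurable_snd.aemeasurable).mp h
  have hiA : Integrable A (γ.prod γ) := by
    refine Integrable.mono' hlog1.abs hmA.aestronglyMeasurable (ae_of_all _ fun p => ?_)
    by_cases hc : b * p.2 ≤ a * p.1 <;>
      simp [hA, hc, abs_nonneg, Real.norm_eq_abs, le_abs_self, abs_abs, le_refl]
  have hiB : Integrable B (γ.prod γ) := by
    refine Integrable.mono' hlog2.abs hmB.aestronglyMeasurable (ae_of_all _ fun p => ?_)
    by_cases hc : b * p.2 ≤ a * p.1 <;>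
      simp [hB, hc, abs_nonneg, Real.norm_eq_abs, le_abs_self, abs_abs, le_refl]
  have hsplit : (fun p : ℝ × ℝ => if b * p.2 ≤ a * p.1 then Real.log p.1 else Real.log p.2)
      = fun p => A p + B p := by
    funext p; by_cases hc : b * p.2 ≤ a * p.1 <;> simp [hA, hB, hc]
  rw [hsplit, integral_add hiA hiB]
  congr 1
  · -- A part
    rw [integral_prod _ hiA]
    have inner : ∀ x : ℝ, ∫ y, A (x, y) ∂γ = gammaCDF α (a * x / b) * Real.log x := by
      intro x
      have heq : (fun y => A (x, y)) = (Iic (a * x / b)).indicator (fun _ => Real.log x) := by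
        funext y
        have hiff : (b * y ≤ a * x) ↔ y ≤ a * x / b := by
          rw [le_div_iff₀ hb, mul_comm]
        simp only [hA, indicator, mem_Iic, hiff]
      rw [heq, integral_indicator_const _ measurableSet_Iic, smul_eq_mul,
        measureReal_def, gammaMeasure_Iic_toReal hα]
      rfl
    rw [integral_congr_ae (ae_of_all _ inner), integral_gammaMeasure hα]
    rw [← setIntegral_eq_integral_of_forall_compl_eq_zero (s := Ioi (0:ℝ)) ?hz]
    · apply setIntegral_congr_fun measurableSet_Ioi
      intro z hz
      have h3 : a / b * z = a * z / b := by ring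
      dsimp only; rw [h3]; ring
    case hz =>
      intro x hx
      rcases lt_or_eq_of_le (not_lt.mp (fun h => hx h) : x ≤ 0) with h | h
      · simp [gammaPDFReal, not_le.mpr h]
      · simp [h]
  · -- B part
    rw [integral_prod_symm _ hiB]
    have inner : ∀ y : ℝ, ∫ x, B (x, y) ∂γ = gammaCDF α (b * y / a) * Real.log y := by
      intro y
      have heq : (fun x => B (x, y)) = (Iio (b * y / a)).indicator (fun _ => Real.log y) := by
        funext x
        have hiff : (b * y ≤ a * x) ↔ ¬ (x < b * y / a) := by
          rw [not_lt, div_le_iff₀ ha, mul_comm a x]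
        simp only [hB, indicator, mem_Iio, hiff, ite_not]
      rw [heq, integral_indicator_const _ measurableSet_Iio, smul_eq_mul,
        measureReal_def, gammaMeasure_Iio_eq_Iic, gammaMeasure_Iic_toReal hα]
      rfl
    rw [integral_congr_ae (ae_of_all _ inner), integral_gammaMeasure hα]
    rw [← setIntegral_eq_integral_of_forall_compl_eq_zero (s := Ioi (0:ℝ)) ?hz2]
    · apply setIntegral_congr_fun measurableSet_Ioi
      intro z hz
      have h3 : b / a * z = b * z / a := by ring
      dsimp only; rw [h3]; ring
    case hz2 =>
      intro x hx
      rcases lt_or_eq_of_le (not_lt.mp (fun h => hx h) : x ≤ 0) with h | h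
      · simp [gammaPDFReal, not_le.mpr h]
      · simp [h]

end Helpers

open Set Real in
/-- For independent X₁ ~ Gamma(α,θ₁), X₂ ~ Gamma(α,θ₂) (scale parametrization),
    with Z₂ = max{X₁,X₂}, H_S = ln θ₁ 1{X₁ ≥ X₂} + ln θ₂ 1{X₁ < X₂} and
    μ = max{θ₁,θ₂}/min{θ₁,θ₂}:
    E[ln Z₂ - H_S] = ∫₀^∞ ln(z) G_α(z/μ) g_α(z) dz + ∫₀^∞ ln(z) G_α(μz) g_α(z) dz. -/
theorem expectation_log_max_sub_selected {Ω : Type*} [MeasurableSpace Ω] (μ : Measure Ω)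
    [IsProbabilityMeasure μ] (α θ₁ θ₂ : ℝ) (hα : 0 < α) (hθ₁ : 0 < θ₁) (hθ₂ : 0 < θ₂)
    (X₁ X₂ : Ω → ℝ) (hm₁ : Measurable X₁) (hm₂ : Measurable X₂)
    (h₁ : Measure.map X₁ μ = gammaMeasure α (1 / θ₁))
    (h₂ : Measure.map X₂ μ = gammaMeasure α (1 / θ₂))
    (hind : IndepFun X₁ X₂ μ) (μr : ℝ) (hμr : μr = max θ₁ θ₂ / min θ₁ θ₂) :
    ∫ ω, (Real.log (max (X₁ ω) (X₂ ω)) -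
        (if X₂ ω ≤ X₁ ω then Real.log θ₁ else Real.log θ₂)) ∂μ =
      (∫ z in Set.Ioi (0:ℝ), Real.log z * gammaCDF α (z / μr) * gammaPDFReal α 1 z) +
        ∫ z in Set.Ioi (0:ℝ), Real.log z * gammaCDF α (μr * z) * gammaPDFReal α 1 z := by
  have hγ : IsProbabilityMeasure (gammaMeasure α 1) := isProbabilityMeasure_gammaMeasure hα one_pos
  set Y₁ : Ω → ℝ := fun ω => θ₁⁻¹ * X₁ ω with hY₁def
  set Y₂ : Ω → ℝ := fun ω => θ₂⁻¹ * X₂ ω with hY₂def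
  have hmY₁ : Measurable Y₁ := hm₁.const_mul _
  have hmY₂ : Measurable Y₂ := hm₂.const_mul _
  have hmapY₁ : Measure.map Y₁ μ = gammaMeasure α 1 := by
    have hco : Y₁ = (fun x => θ₁⁻¹ * x) ∘ X₁ := rfl
    rw [hco, ← Measure.map_map (measurable_const_mul _) hm₁, h₁,
      gammaMeasure_map (by positivity) (by positivity)]
    congr 1
    field_simp
  have hmapY₂ : Measure.map Y₂ μ = gammaMeasure α 1 := by
    have hco : Y₂ = (fun x => θ₂⁻¹ * x) ∘ X₂ := rfl
    rw [hco, ← Measure.map_map (measurable_const_mul _) hm₂, h₂,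
      gammaMeasure_map (by positivity) (by positivity)]
    congr 1
    field_simp
  have hindY : IndepFun Y₁ Y₂ μ :=
    hind.comp (measurable_const_mul θ₁⁻¹) (measurable_const_mul θ₂⁻¹)
  have hpair : Measure.map (fun ω => (Y₁ ω, Y₂ ω)) μ
      = (gammaMeasure α 1).prod (gammaMeasure α 1) := by
    have hp := (indepFun_iff_map_prod_eq_prod_map_map hmY₁.aemeasurable hmY₂.aemeasurable).mp hindY
    rw [hmapY₁, hmapY₂] at hp
    exact hp
  set F : ℝ × ℝ → ℝ := fun p => if θ₂ * p.2 ≤ θ₁ * p.1 then Real.log p.1 else Real.log p.2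
    with hF
  have hmF : Measurable F := Measurable.ite
    (measurableSet_le (measurable_snd.const_mul θ₂) (measurable_fst.const_mul θ₁))
    (Real.measurable_log.comp measurable_fst) (Real.measurable_log.comp measurable_snd)
  have hpos₁ : ∀ᵐ ω ∂μ, 0 < X₁ ω := by
    have h := gammaMeasure_ae_pos (α := α) (r := 1/θ₁) (by positivity)
    rw [← h₁] at h
    exact (ae_map_iff hm₁.aemeasurable measurableSet_Ioi).mp h
  have hpos₂ : ∀ᵐ ω ∂μ, 0 < X₂ ω := by
    have h := gammaMeasure_ae_pos (α := α) (r := 1/θ₂) (by positivity)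
    rw [← h₂] at h
    exact (ae_map_iff hm₂.aemeasurable measurableSet_Ioi).mp h
  have hae : (fun ω => Real.log (max (X₁ ω) (X₂ ω)) -
      (if X₂ ω ≤ X₁ ω then Real.log θ₁ else Real.log θ₂)) =ᵐ[μ]
      fun ω => F (Y₁ ω, Y₂ ω) := by
    filter_upwards [hpos₁, hpos₂] with ω h1 h2
    have e1 : θ₁ * Y₁ ω = X₁ ω := by show θ₁ * (θ₁⁻¹ * X₁ ω) = X₁ ω; rw [← mul_assoc, mul_inv_cancel₀ hθ₁.ne', one_mul]
    have e2 : θ₂ * Y₂ ω = X₂ ω := by show θ₂ * (θ₂⁻¹ * X₂ ω) = X₂ ω; rw [← mul_assoc, mul_inv_cancel₀ hθ₂.ne', one_mul]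
    simp only [hF, e1, e2]
    by_cases hc : X₂ ω ≤ X₁ ω
    · rw [if_pos hc, if_pos hc, max_eq_left hc]
      show Real.log (X₁ ω) - Real.log θ₁ = Real.log (θ₁⁻¹ * X₁ ω)
      rw [Real.log_mul (inv_ne_zero hθ₁.ne') h1.ne', Real.log_inv]
      ring
    · rw [if_neg hc, if_neg hc, max_eq_right (le_of_not_ge hc)]
      show Real.log (X₂ ω) - Real.log θ₂ = Real.log (θ₂⁻¹ * X₂ ω)
      rw [Real.log_mul (inv_ne_zero hθ₂.ne') h2.ne', Real.log_inv]
      ring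
  rw [integral_congr_ae hae,
    show ∫ ω, F (Y₁ ω, Y₂ ω) ∂μ = ∫ p, F p ∂((gammaMeasure α 1).prod (gammaMeasure α 1)) by
      rw [← hpair, integral_map (hmY₁.prodMk hmY₂).aemeasurable hmF.aestronglyMeasurable],
    key_integral hα hθ₁ hθ₂]
  rcases le_total θ₂ θ₁ with hord | hord
  · have hμr' : μr = θ₁ / θ₂ := by rw [hμr, max_eq_left hord, min_eq_right hord]
    have k1 : ∀ z : ℝ, θ₁ / θ₂ * z = μr * z := by intro z; rw [hμr']
    have k2 : ∀ z : ℝ, θ₂ / θ₁ * z = z / μr := by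
      intro z; rw [hμr']; field_simp
    simp_rw [k1, k2]
    exact add_comm _ _
  · have hμr' : μr = θ₂ / θ₁ := by rw [hμr, max_eq_right hord, min_eq_left hord]
    have k1 : ∀ z : ℝ, θ₁ / θ₂ * z = z / μr := by
      intro z; rw [hμr']; field_simp
    have k2 : ∀ z : ℝ, θ₂ / θ₁ * z = μr * z := by intro z; rw [hμr']
    simp_rw [k1, k2]
end

section
/- With c*(μ) as in the worse-selection problem (c*(μ) = ∫₀^∞ ln(z) G_α(z/μ) g_α(z) dz + ∫₀^∞ ln(z) G_α(μz) g_α(z) dz for μ ≥ 1): inf_{μ≥1} c*(μ) = ψ(α) and sup_{μ≥1} c*(μ) = 2∫₀^∞ ln(z) G_α(z) g_α(z) dz, the inf attained as μ → ∞ and the sup attained at μ = 1. -/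
open MeasureTheory ProbabilityTheory

/-- The digamma function ψ = Γ'/Γ. -/
noncomputable def digamma (x : ℝ) : ℝ := deriv Real.Gamma x / Real.Gamma x

namespace CstarAux

open Real Set Filter Topology

noncomputable def rho : Measure ℝ := volume.restrict (Set.Ioi 0)

variable {α : ℝ}

lemma g_nonneg (hα : 0 < α) (x : ℝ) : 0 ≤ gammaPDFReal α 1 x :=
  gammaPDFReal_nonneg hα one_pos x

lemma g_pos (hα : 0 < α) {x : ℝ} (hx : 0 < x) : 0 < gammaPDFReal α 1 x :=
  gammaPDFReal_pos hα one_pos hx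

lemma g_eq (hα : 0 < α) {x : ℝ} (hx : 0 < x) :
    gammaPDFReal α 1 x = (1 / Real.Gamma α) * (x ^ (α - 1) * Real.exp (-x)) := by
  rw [gammaPDFReal, if_pos hx.le, Real.one_rpow]
  ring_nf

lemma g_int (hα : 0 < α) : Integrable (gammaPDFReal α 1) := by
  refine ⟨(measurable_gammaPDFReal α 1).aestronglyMeasurable, ?_⟩
  rw [hasFiniteIntegral_iff_ofReal (ae_of_all _ (g_nonneg hα))]
  have h := lintegral_gammaPDF_eq_one hα one_pos
  simp only [gammaPDF] at h
  rw [h]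
  exact ENNReal.one_lt_top

lemma g_integral_one (hα : 0 < α) : ∫ x, gammaPDFReal α 1 x = 1 := by
  rw [integral_eq_lintegral_of_nonneg_ae (ae_of_all _ (g_nonneg hα))
    (measurable_gammaPDFReal α 1).aestronglyMeasurable]
  have h := lintegral_gammaPDF_eq_one hα one_pos
  simp only [gammaPDF] at h
  rw [h, ENNReal.toReal_one]

lemma g_ae_zero_Iic (hα : 0 < α) :
    ∀ᵐ x ∂(volume.restrict (Set.Iic (0:ℝ))), gammaPDFReal α 1 x = 0 := by
  have h0 : ∀ᵐ (x : ℝ) ∂volume, x ≠ 0 := by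
    rw [ae_iff]
    simpa using (by simp : (volume : Measure ℝ) {0} = 0)
  rw [ae_restrict_iff' measurableSet_Iic]
  filter_upwards [h0] with x hx0 hx
  have hlt : x < 0 := lt_of_le_of_ne hx hx0
  rw [gammaPDFReal, if_neg (not_le.2 hlt)]

lemma g_integral_Ioi_one (hα : 0 < α) : ∫ x in Set.Ioi (0:ℝ), gammaPDFReal α 1 x = 1 := by
  have h := integral_add_compl (measurableSet_Ioi (a := (0:ℝ))) (g_int hα)
  rw [compl_Ioi] at h
  rw [integral_eq_zero_of_ae (g_ae_zero_Iic hα), add_zero] at h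
  rw [h, g_integral_one hα]

end CstarAux

section Part2
namespace CstarAux
open Real Set Filter Topology

variable {α : ℝ}

lemma gammaCDF_nonneg (hα : 0 < α) (c : ℝ) : 0 ≤ gammaCDF α c :=
  setIntegral_nonneg measurableSet_Iic fun x _ => g_nonneg hα x

lemma gammaCDF_mono (hα : 0 < α) : Monotone (gammaCDF α) := by
  intro a b hab
  exact setIntegral_mono_set (g_int hα).integrableOn
    (ae_of_all _ (g_nonneg hα)) (HasSubset.Subset.eventuallyLE (Iic_subset_Iic.2 hab))

lemma gammaCDF_le_one (hα : 0 < α) (c : ℝ) : gammaCDF α c ≤ 1 := by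
  rw [← g_integral_one hα]
  exact setIntegral_le_integral (g_int hα) (ae_of_all _ (g_nonneg hα))

lemma gammaCDF_meas (hα : 0 < α) : Measurable (gammaCDF α) :=
  (gammaCDF_mono hα).measurable

lemma gammaCDF_eq_indicator (hα : 0 < α) (c : ℝ) :
    gammaCDF α c = ∫ y in Set.Ioi (0:ℝ), (Set.Iic c).indicator (gammaPDFReal α 1) y := by
  rw [setIntegral_indicator measurableSet_Iic]
  have h1 : gammaCDF α c = ∫ y in Set.Iic c, (Set.Ioi (0:ℝ)).indicator (gammaPDFReal α 1) y := by
    unfold gammaCDF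
    refine setIntegral_congr_ae measurableSet_Iic ?_
    have h0 : ∀ᵐ (x : ℝ) ∂volume, x ≠ 0 := by
      rw [ae_iff]; simpa using (by simp : (volume : Measure ℝ) {0} = 0)
    filter_upwards [h0] with x hx0 _
    by_cases hx : x ∈ Set.Ioi (0:ℝ)
    · rw [Set.indicator_of_mem hx]
    · rw [Set.indicator_of_notMem hx, gammaPDFReal,
        if_neg (not_le.2 (lt_of_le_of_ne (not_lt.1 (fun h => hx h)) hx0))]
  rw [h1, setIntegral_indicator measurableSet_Ioi, Set.inter_comm]

lemma log_abs_g_int (hα : 0 < α) :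
    IntegrableOn (fun z => |Real.log z| * gammaPDFReal α 1 z) (Set.Ioi 0) := by
  have hΓ : 0 < Real.Gamma α := Real.Gamma_pos_of_pos hα
  have c1 : IntegrableOn (fun x : ℝ => Real.exp (-x) * x ^ (α / 2 - 1)) (Set.Ioi 0) :=
    Real.GammaIntegral_convergent (by linarith)
  have c2 : IntegrableOn (fun x : ℝ => Real.exp (-x) * x ^ ((α + 1) - 1)) (Set.Ioi 0) :=
    Real.GammaIntegral_convergent (by linarith)
  set h : ℝ → ℝ := fun x =>
    (1 / Real.Gamma α) * ((2 / α) * (Real.exp (-x) * x ^ (α / 2 - 1))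
      + Real.exp (-x) * x ^ ((α + 1) - 1)) with hh
  have hint : IntegrableOn h (Set.Ioi 0) := (((c1.const_mul _).add c2).const_mul _)
  refine Integrable.mono' hint
    ((measurable_log.abs.mul (measurable_gammaPDFReal α 1)).aestronglyMeasurable) ?_
  rw [ae_restrict_iff' measurableSet_Ioi]
  refine ae_of_all _ fun x hx => ?_
  have hx0 : (0:ℝ) < x := hx
  have hgx : gammaPDFReal α 1 x = (1 / Real.Gamma α) * (x ^ (α - 1) * Real.exp (-x)) :=
    g_eq hα hx0
  rw [Real.norm_eq_abs, abs_of_nonneg (mul_nonneg (abs_nonneg _) (g_nonneg hα x)), hgx, hh]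
  rw [mul_comm (|Real.log x|), mul_assoc]
  refine mul_le_mul_of_nonneg_left ?_ (by positivity)
  rcases le_total x 1 with hx1 | hx1
  · -- |log x| ≤ (2/α) * x ^ (-(α/2))
    have hlog : |Real.log x| ≤ (2 / α) * x ^ (-(α / 2)) := by
      rw [abs_of_nonpos (Real.log_nonpos hx0.le hx1)]
      have h1 : Real.log (x ^ (-(α / 2))) ≤ x ^ (-(α / 2)) :=
        (Real.log_le_sub_one_of_pos (Real.rpow_pos_of_pos hx0 _)).trans (by linarith)
      rw [Real.log_rpow hx0] at h1
      rw [show -Real.log x = (2 / α) * (-(α / 2) * Real.log x) by field_simp]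
      exact mul_le_mul_of_nonneg_left h1 (by positivity)
    have key : x ^ (α - 1) * Real.exp (-x) * |Real.log x|
        ≤ (2 / α) * (Real.exp (-x) * x ^ (α / 2 - 1)) := by
      calc x ^ (α - 1) * Real.exp (-x) * |Real.log x|
          ≤ x ^ (α - 1) * Real.exp (-x) * ((2 / α) * x ^ (-(α / 2))) := by
            exact mul_le_mul_of_nonneg_left hlog (by positivity)
        _ = (2 / α) * (Real.exp (-x) * (x ^ (α - 1) * x ^ (-(α / 2)))) := by ring
        _ = (2 / α) * (Real.exp (-x) * x ^ (α / 2 - 1)) := by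
            rw [← Real.rpow_add hx0]; ring_nf
    refine key.trans ?_
    have : (0:ℝ) ≤ Real.exp (-x) * x ^ ((α + 1) - 1) := by positivity
    linarith
  · have hlog : |Real.log x| ≤ x := by
      rw [abs_of_nonneg (Real.log_nonneg hx1)]
      linarith [Real.log_le_sub_one_of_pos (by linarith : (0:ℝ) < x)]
    have key : x ^ (α - 1) * Real.exp (-x) * |Real.log x|
        ≤ Real.exp (-x) * x ^ ((α + 1) - 1) := by
      calc x ^ (α - 1) * Real.exp (-x) * |Real.log x|
          ≤ x ^ (α - 1) * Real.exp (-x) * x := by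
            exact mul_le_mul_of_nonneg_left hlog (by positivity)
        _ = Real.exp (-x) * (x ^ (α - 1) * x ^ (1:ℝ)) := by rw [Real.rpow_one]; ring
        _ = Real.exp (-x) * x ^ ((α + 1) - 1) := by rw [← Real.rpow_add hx0]; ring_nf
    refine key.trans ?_
    have : (0:ℝ) ≤ (2 / α) * (Real.exp (-x) * x ^ (α / 2 - 1)) := by positivity
    linarith

lemma log_g_int (hα : 0 < α) :
    IntegrableOn (fun z => Real.log z * gammaPDFReal α 1 z) (Set.Ioi 0) := by
  refine Integrable.mono' (log_abs_g_int hα)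
    ((measurable_log.mul (measurable_gammaPDFReal α 1)).aestronglyMeasurable) ?_
  refine ae_of_all _ fun x => ?_
  rw [Real.norm_eq_abs, abs_mul, abs_of_nonneg (g_nonneg hα x)]

end CstarAux
end Part2

section Part3
namespace CstarAux
open Real Set Filter Topology

variable {α : ℝ}

lemma hasDerivAt_realGamma (hα : 0 < α) :
    HasDerivAt Real.Gamma
      (∫ t in Set.Ioi (0:ℝ), t ^ (α - 1) * (Real.log t * Real.exp (-t))) α := by
  have hre : 0 < ((α : ℂ)).re := by simpa using hα
  have h1 := Complex.hasDerivAt_GammaIntegral hre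
  have h2 : HasDerivAt Complex.Gamma
      (∫ t : ℝ in Set.Ioi 0, (t:ℂ) ^ ((α:ℂ) - 1) * (Real.log t * Real.exp (-t))) (α:ℂ) := by
    refine h1.congr_of_eventuallyEq ?_
    have hopen : IsOpen {s : ℂ | 0 < s.re} := isOpen_lt continuous_const Complex.continuous_re
    filter_upwards [hopen.mem_nhds hre] with s hs
    exact Complex.Gamma_eq_integral hs
  have hD : (∫ t : ℝ in Set.Ioi 0, (t:ℂ) ^ ((α:ℂ) - 1) * (Real.log t * Real.exp (-t)))
      = ((∫ t in Set.Ioi (0:ℝ), t ^ (α - 1) * (Real.log t * Real.exp (-t)) : ℝ) : ℂ) := by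
    have hcongr : (∫ t : ℝ in Set.Ioi 0, (t:ℂ) ^ ((α:ℂ) - 1) * (Real.log t * Real.exp (-t)))
        = ∫ t : ℝ in Set.Ioi 0,
            ((t ^ (α - 1) * (Real.log t * Real.exp (-t)) : ℝ) : ℂ) := by
      refine setIntegral_congr_ae measurableSet_Ioi (ae_of_all _ fun t ht => ?_)
      have ht0 : (0:ℝ) < t := ht
      rw [show ((α:ℂ) - 1) = ((α - 1 : ℝ) : ℂ) by push_cast; ring,
        ← Complex.ofReal_cpow ht0.le]
      push_cast
      ring
    rw [hcongr]
    exact integral_ofReal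
  rw [hD] at h2
  have h3 := h2.real_of_complex
  have : (fun x : ℝ => (Complex.Gamma (x:ℂ)).re) = Real.Gamma := rfl
  simpa [this] using h3

lemma digamma_eq (hα : 0 < α) :
    ∫ z in Set.Ioi (0:ℝ), Real.log z * gammaPDFReal α 1 z = digamma α := by
  have hΓ : 0 < Real.Gamma α := Real.Gamma_pos_of_pos hα
  have hd := (hasDerivAt_realGamma hα).deriv
  have h1 : ∫ z in Set.Ioi (0:ℝ), Real.log z * gammaPDFReal α 1 z
      = (1 / Real.Gamma α) * ∫ t in Set.Ioi (0:ℝ), t ^ (α - 1) * (Real.log t * Real.exp (-t)) := by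
    rw [← integral_const_mul]
    refine setIntegral_congr_ae measurableSet_Ioi (ae_of_all _ fun z hz => ?_)
    rw [g_eq hα hz]
    ring
  rw [h1, digamma, hd]
  field_simp
end CstarAux
end Part3

section Part4
namespace CstarAux
open Real Set Filter Topology

noncomputable abbrev rr : Measure (ℝ × ℝ) :=
  (volume.restrict (Set.Ioi (0:ℝ))).prod (volume.restrict (Set.Ioi (0:ℝ)))

def S1 (μ : ℝ) : Set (ℝ × ℝ) := {p | μ * p.2 ≤ p.1}
def S2 (μ : ℝ) : Set (ℝ × ℝ) := {p | p.2 ≤ μ * p.1}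
def S3 (μ : ℝ) : Set (ℝ × ℝ) := {p | μ * p.2 < p.1}
def S4 (μ : ℝ) : Set (ℝ × ℝ) := {p | μ * p.1 < p.2}

lemma hS1 (μ : ℝ) : MeasurableSet (S1 μ) :=
  measurableSet_le (measurable_snd.const_mul μ) measurable_fst
lemma hS2 (μ : ℝ) : MeasurableSet (S2 μ) :=
  measurableSet_le measurable_snd (measurable_fst.const_mul μ)
lemma hS3 (μ : ℝ) : MeasurableSet (S3 μ) :=
  measurableSet_lt (measurable_snd.const_mul μ) measurable_fst
lemma hS4 (μ : ℝ) : MeasurableSet (S4 μ) :=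
  measurableSet_lt (measurable_fst.const_mul μ) measurable_snd

noncomputable def fInt (α : ℝ) : ℝ × ℝ → ℝ := fun p =>
  (Real.log p.1 - Real.log p.2) * (gammaPDFReal α 1 p.1 * gammaPDFReal α 1 p.2)

noncomputable def hB1 (α : ℝ) : ℝ × ℝ → ℝ := fun p =>
  Real.log p.1 * (gammaPDFReal α 1 p.1 * gammaPDFReal α 1 p.2)

noncomputable def hB2 (α : ℝ) : ℝ × ℝ → ℝ := fun p =>
  Real.log p.2 * (gammaPDFReal α 1 p.1 * gammaPDFReal α 1 p.2)

noncomputable def bound (α : ℝ) : ℝ × ℝ → ℝ := fun p =>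
  (|Real.log p.1| + |Real.log p.2|) * (gammaPDFReal α 1 p.1 * gammaPDFReal α 1 p.2)

lemma rr_def : rr = (volume.restrict (Set.Ioi (0:ℝ))).prod (volume.restrict (Set.Ioi (0:ℝ))) :=
  rfl

noncomputable def FF (α μ : ℝ) : ℝ := ∫ p, (S1 μ).indicator (fInt α) p ∂rr

variable {α : ℝ}

lemma fInt_meas : Measurable (fInt α) :=
  ((measurable_log.comp measurable_fst).sub (measurable_log.comp measurable_snd)).mul
    (((measurable_gammaPDFReal α 1).comp measurable_fst).mul
      ((measurable_gammaPDFReal α 1).comp measurable_snd))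

lemma hB1_meas : Measurable (hB1 α) :=
  (measurable_log.comp measurable_fst).mul
    (((measurable_gammaPDFReal α 1).comp measurable_fst).mul
      ((measurable_gammaPDFReal α 1).comp measurable_snd))

lemma hB2_meas : Measurable (hB2 α) :=
  (measurable_log.comp measurable_snd).mul
    (((measurable_gammaPDFReal α 1).comp measurable_fst).mul
      ((measurable_gammaPDFReal α 1).comp measurable_snd))

lemma bound_int (hα : 0 < α) : Integrable (bound α) rr := by
  have h1 : Integrable (fun p : ℝ × ℝ =>
      (|Real.log p.1| * gammaPDFReal α 1 p.1) * gammaPDFReal α 1 p.2) rr :=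
    (log_abs_g_int hα).mul_prod (g_int hα).integrableOn
  have h2 : Integrable (fun p : ℝ × ℝ =>
      gammaPDFReal α 1 p.1 * (|Real.log p.2| * gammaPDFReal α 1 p.2)) rr :=
    ((g_int hα).integrableOn).mul_prod (log_abs_g_int hα)
  refine (h1.add h2).congr (ae_of_all _ fun p => ?_)
  simp only [bound, Pi.add_apply]
  ring

lemma fInt_bound (hα : 0 < α) (p : ℝ × ℝ) : |fInt α p| ≤ bound α p := by
  have hg : 0 ≤ gammaPDFReal α 1 p.1 * gammaPDFReal α 1 p.2 :=
    mul_nonneg (g_nonneg hα _) (g_nonneg hα _)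
  rw [fInt, bound, abs_mul, abs_of_nonneg hg]
  exact mul_le_mul_of_nonneg_right (abs_sub _ _) hg

lemma hB1_bound (hα : 0 < α) (p : ℝ × ℝ) : |hB1 α p| ≤ bound α p := by
  have hg : 0 ≤ gammaPDFReal α 1 p.1 * gammaPDFReal α 1 p.2 :=
    mul_nonneg (g_nonneg hα _) (g_nonneg hα _)
  rw [hB1, bound, abs_mul, abs_of_nonneg hg]
  exact mul_le_mul_of_nonneg_right (le_add_of_nonneg_right (abs_nonneg _)) hg

lemma hB2_bound (hα : 0 < α) (p : ℝ × ℝ) : |hB2 α p| ≤ bound α p := by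
  have hg : 0 ≤ gammaPDFReal α 1 p.1 * gammaPDFReal α 1 p.2 :=
    mul_nonneg (g_nonneg hα _) (g_nonneg hα _)
  rw [hB2, bound, abs_mul, abs_of_nonneg hg]
  exact mul_le_mul_of_nonneg_right (le_add_of_nonneg_left (abs_nonneg _)) hg

lemma ind_integrable (hα : 0 < α) {S : Set (ℝ × ℝ)} (hS : MeasurableSet S) {h : ℝ × ℝ → ℝ}
    (hm : Measurable h) (hb : ∀ p, |h p| ≤ bound α p) : Integrable (S.indicator h) rr := by
  refine Integrable.mono' (bound_int hα) (hm.indicator hS).aestronglyMeasurable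
    (ae_of_all _ fun p => ?_)
  refine (norm_indicator_le_norm_self _ _).trans ?_
  rw [Real.norm_eq_abs]
  exact hb p

lemma hB_integrable (hα : 0 < α) : Integrable (hB1 α) rr := by
  have := ind_integrable hα MeasurableSet.univ (hB1_meas) (hB1_bound hα)
  rwa [Set.indicator_univ] at this

end CstarAux
end Part4

section Part5
namespace CstarAux
open Real Set Filter Topology

variable {α : ℝ}

lemma A_eq (hα : 0 < α) {μ : ℝ} (hμ : 0 < μ) :
    ∫ z in Set.Ioi (0:ℝ), Real.log z * gammaCDF α (z / μ) * gammaPDFReal α 1 z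
      = ∫ p, (S1 μ).indicator (hB1 α) p ∂rr := by
  have hint : Integrable
      (Function.uncurry fun z y => (S1 μ).indicator (hB1 α) (z, y)) rr := by
    have heq : (Function.uncurry fun z y => (S1 μ).indicator (hB1 α) (z, y))
        = (S1 μ).indicator (hB1 α) := rfl
    rw [heq]
    exact ind_integrable hα (hS1 μ) hB1_meas (hB1_bound hα)
  have h2 := integral_integral hint
  simp only [Prod.mk.eta] at h2
  rw [← h2]
  refine setIntegral_congr_ae measurableSet_Ioi (ae_of_all _ fun z hz => ?_)
  have hz0 : (0:ℝ) < z := hz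
  have hinner : ∀ y, (S1 μ).indicator (hB1 α) (z, y)
      = (Real.log z * gammaPDFReal α 1 z) * (Set.Iic (z / μ)).indicator (gammaPDFReal α 1) y := by
    intro y
    by_cases hy : μ * y ≤ z
    · rw [Set.indicator_of_mem (show (z, y) ∈ S1 μ from hy),
        Set.indicator_of_mem (show y ∈ Set.Iic (z / μ) from (le_div_iff₀ hμ).2 (by linarith))]
      simp only [hB1]
      ring
    · rw [Set.indicator_of_notMem (show (z, y) ∉ S1 μ from hy),
        Set.indicator_of_notMem
          (show y ∉ Set.Iic (z / μ) from fun hc => hy (by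
            have := (le_div_iff₀ hμ).1 hc; linarith)), mul_zero]
  simp only [hinner]
  rw [integral_const_mul, ← gammaCDF_eq_indicator hα]
  ring

lemma B_eq (hα : 0 < α) {μ : ℝ} (hμ : 0 < μ) :
    ∫ z in Set.Ioi (0:ℝ), Real.log z * gammaCDF α (μ * z) * gammaPDFReal α 1 z
      = ∫ p, (S2 μ).indicator (hB1 α) p ∂rr := by
  have hint : Integrable
      (Function.uncurry fun z y => (S2 μ).indicator (hB1 α) (z, y)) rr := by
    have heq : (Function.uncurry fun z y => (S2 μ).indicator (hB1 α) (z, y))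
        = (S2 μ).indicator (hB1 α) := rfl
    rw [heq]
    exact ind_integrable hα (hS2 μ) hB1_meas (hB1_bound hα)
  have h2 := integral_integral hint
  simp only [Prod.mk.eta] at h2
  rw [← h2]
  refine setIntegral_congr_ae measurableSet_Ioi (ae_of_all _ fun z hz => ?_)
  have hinner : ∀ y, (S2 μ).indicator (hB1 α) (z, y)
      = (Real.log z * gammaPDFReal α 1 z) * (Set.Iic (μ * z)).indicator (gammaPDFReal α 1) y := by
    intro y
    by_cases hy : y ≤ μ * z
    · rw [Set.indicator_of_mem (show (z, y) ∈ S2 μ from hy),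
        Set.indicator_of_mem (show y ∈ Set.Iic (μ * z) from hy)]
      simp only [hB1]
      ring
    · rw [Set.indicator_of_notMem (show (z, y) ∉ S2 μ from hy),
        Set.indicator_of_notMem (show y ∉ Set.Iic (μ * z) from hy), mul_zero]
  simp only [hinner]
  rw [integral_const_mul, ← gammaCDF_eq_indicator hα]
  ring

lemma hB1_integral (hα : 0 < α) : ∫ p, hB1 α p ∂rr = digamma α := by
  have h : ∫ p, hB1 α p ∂rr
      = ∫ p : ℝ × ℝ, (fun z => Real.log z * gammaPDFReal α 1 z) p.1
          * (gammaPDFReal α 1) p.2 ∂rr := by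
    refine integral_congr_ae (ae_of_all _ fun p => ?_)
    simp only [hB1]
    ring
  have hpm := MeasureTheory.integral_prod_mul (L := ℝ)
    (μ := volume.restrict (Set.Ioi (0:ℝ))) (ν := volume.restrict (Set.Ioi (0:ℝ)))
    (fun z => Real.log z * gammaPDFReal α 1 z) (gammaPDFReal α 1)
  rw [h, rr_def, hpm, digamma_eq hα, g_integral_Ioi_one hα, mul_one]

lemma B_split (hα : 0 < α) {μ : ℝ} (hμ : 0 < μ) :
    ∫ p, (S2 μ).indicator (hB1 α) p ∂rr
      = digamma α - ∫ p, (S4 μ).indicator (hB1 α) p ∂rr := by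
  have hint4 : Integrable ((S4 μ).indicator (hB1 α)) rr :=
    ind_integrable hα (hS4 μ) hB1_meas (hB1_bound hα)
  have hcompl : ∀ p, (S2 μ).indicator (hB1 α) p
      = hB1 α p - (S4 μ).indicator (hB1 α) p := by
    intro p
    by_cases h : p.2 ≤ μ * p.1
    · rw [Set.indicator_of_mem (show p ∈ S2 μ from h),
        Set.indicator_of_notMem (show p ∉ S4 μ from not_lt.2 h), sub_zero]
    · rw [Set.indicator_of_notMem (show p ∉ S2 μ from h),
        Set.indicator_of_mem (show p ∈ S4 μ from not_le.1 h), sub_self]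
  simp only [hcompl]
  rw [integral_sub (hB_integrable hα) hint4, hB1_integral hα]

lemma swap_eq (hα : 0 < α) (μ : ℝ) :
    ∫ p, (S4 μ).indicator (hB1 α) p ∂rr = ∫ p, (S3 μ).indicator (hB2 α) p ∂rr := by
  have h1 : ∫ p, (S4 μ).indicator (hB1 α) p ∂rr
      = ∫ p, ((S3 μ).indicator (hB2 α)) p.swap ∂rr := by
    refine integral_congr_ae (ae_of_all _ fun p => ?_)
    show (S4 μ).indicator (hB1 α) p = (S3 μ).indicator (hB2 α) p.swap
    by_cases h : μ * p.1 < p.2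
    · rw [Set.indicator_of_mem (show p ∈ S4 μ from h),
        Set.indicator_of_mem (show p.swap ∈ S3 μ from h)]
      simp only [hB1, hB2, Prod.fst_swap, Prod.snd_swap]
      ring
    · rw [Set.indicator_of_notMem (show p ∉ S4 μ from h),
        Set.indicator_of_notMem (show p.swap ∉ S3 μ from h)]
  rw [h1]
  exact integral_prod_swap _

lemma diag_null {μ : ℝ} (hμ : μ ≠ 0) : rr {p : ℝ × ℝ | p.1 = μ * p.2} = 0 := by
  have hm : MeasurableSet {p : ℝ × ℝ | p.1 = μ * p.2} :=
    measurableSet_eq_fun measurable_fst (measurable_snd.const_mul μ)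
  rw [MeasureTheory.Measure.prod_apply hm]
  have hslice : ∀ x : ℝ,
      (volume.restrict (Set.Ioi (0:ℝ))) (Prod.mk x ⁻¹' {p : ℝ × ℝ | p.1 = μ * p.2}) = 0 := by
    intro x
    have hsub : (Prod.mk x ⁻¹' {p : ℝ × ℝ | p.1 = μ * p.2}) ⊆ {x / μ} := by
      intro y hy
      have : x = μ * y := hy
      simp only [Set.mem_singleton_iff]
      field_simp [this]
      rw [this]; ring
    refine measure_mono_null hsub ?_
    refine le_antisymm ?_ zero_le
    calc (volume.restrict (Set.Ioi (0:ℝ))) {x / μ} ≤ volume {x / μ} :=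
          Measure.restrict_le_self _
      _ = 0 := by simp
  simp only [hslice]
  simp

lemma cstar_key (hα : 0 < α) {μ : ℝ} (hμ : 0 < μ) :
    cstarW α μ = digamma α + FF α μ := by
  rw [cstarW, A_eq hα hμ, B_eq hα hμ, B_split hα hμ, swap_eq hα μ]
  have hsub : ∫ p, (S1 μ).indicator (hB1 α) p ∂rr - ∫ p, (S3 μ).indicator (hB2 α) p ∂rr
      = FF α μ := by
    rw [← integral_sub (ind_integrable hα (hS1 μ) hB1_meas (hB1_bound hα))
      (ind_integrable hα (hS3 μ) hB2_meas (hB2_bound hα))]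
    refine integral_congr_ae ?_
    have hdiag : ∀ᵐ p ∂rr, p ∉ {p : ℝ × ℝ | p.1 = μ * p.2} := by
      rw [ae_iff]
      simpa using diag_null hμ.ne'
    filter_upwards [hdiag] with p hp
    by_cases h : μ * p.2 < p.1
    · rw [Set.indicator_of_mem (show p ∈ S1 μ from h.le),
        Set.indicator_of_mem (show p ∈ S3 μ from h),
        Set.indicator_of_mem (show p ∈ S1 μ from h.le)]
      simp only [fInt, hB1, hB2]
      ring
    · have h2 : ¬ (μ * p.2 ≤ p.1) := by
        intro hle
        exact hp (le_antisymm (not_lt.1 h) hle ▸ rfl)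
      rw [Set.indicator_of_notMem (show p ∉ S1 μ from h2),
        Set.indicator_of_notMem (show p ∉ S3 μ from h),
        Set.indicator_of_notMem (show p ∉ S1 μ from h2), sub_zero]
  rw [← hsub]
  ring

end CstarAux
end Part5

section Part6
namespace CstarAux
open Real Set Filter Topology

variable {α : ℝ}

lemma mem_ae_rr : ∀ᵐ p ∂rr, p ∈ (Set.Ioi (0:ℝ) ×ˢ Set.Ioi (0:ℝ)) := by
  rw [rr_def, Measure.prod_restrict]
  exact ae_restrict_mem (measurableSet_Ioi.prod measurableSet_Ioi)

lemma fInt_nonneg_on (hα : 0 < α) {μ : ℝ} (hμ : 1 ≤ μ) {p : ℝ × ℝ}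
    (hp : p ∈ (Set.Ioi (0:ℝ) ×ˢ Set.Ioi (0:ℝ))) :
    0 ≤ (S1 μ).indicator (fInt α) p := by
  refine Set.indicator_apply_nonneg fun h => ?_
  have hp1 : (0:ℝ) < p.1 := hp.1
  have hp2 : (0:ℝ) < p.2 := hp.2
  have h1 : p.2 ≤ p.1 := le_trans (le_mul_of_one_le_left hp2.le hμ) h
  refine mul_nonneg (sub_nonneg.2 (Real.log_le_log hp2 h1))
    (mul_nonneg (g_nonneg hα _) (g_nonneg hα _))

lemma FF_nonneg (hα : 0 < α) {μ : ℝ} (hμ : 1 ≤ μ) : 0 ≤ FF α μ := by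
  refine integral_nonneg_of_ae ?_
  filter_upwards [mem_ae_rr] with p hp
  exact fInt_nonneg_on hα hμ hp

lemma FF_mono (hα : 0 < α) {μ μ' : ℝ} (h1 : 1 ≤ μ) (h2 : μ ≤ μ') : FF α μ' ≤ FF α μ := by
  refine integral_mono_ae (ind_integrable hα (hS1 μ') fInt_meas (fInt_bound hα))
    (ind_integrable hα (hS1 μ) fInt_meas (fInt_bound hα)) ?_
  filter_upwards [mem_ae_rr] with p hp
  have hp2 : (0:ℝ) < p.2 := hp.2
  by_cases hc : μ' * p.2 ≤ p.1
  · have hc' : μ * p.2 ≤ p.1 := le_trans (mul_le_mul_of_nonneg_right h2 hp2.le) hc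
    rw [Set.indicator_of_mem (show p ∈ S1 μ' from hc),
      Set.indicator_of_mem (show p ∈ S1 μ from hc')]
  · rw [Set.indicator_of_notMem (show p ∉ S1 μ' from hc)]
    exact fInt_nonneg_on hα h1 hp

lemma FF_tendsto (hα : 0 < α) : Filter.Tendsto (FF α) Filter.atTop (𝓝 0) := by
  have h := tendsto_integral_filter_of_dominated_convergence (μ := rr)
    (F := fun (μ : ℝ) p => (S1 μ).indicator (fInt α) p) (f := fun _ => (0:ℝ))
    (bound := bound α) (l := Filter.atTop)
    (Filter.Eventually.of_forall fun μ =>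
      (fInt_meas.indicator (hS1 μ)).aestronglyMeasurable)
    (Filter.Eventually.of_forall fun μ => ae_of_all _ fun p => by
      refine (norm_indicator_le_norm_self _ _).trans ?_
      rw [Real.norm_eq_abs]
      exact fInt_bound hα p)
    (bound_int hα) ?_
  · exact (by simpa using h : Filter.Tendsto (fun μ => ∫ p, (S1 μ).indicator (fInt α) p ∂rr) Filter.atTop (𝓝 0))
  · filter_upwards [mem_ae_rr] with p hp
    have hp2 : (0:ℝ) < p.2 := hp.2
    refine Filter.Tendsto.congr' ?_ tendsto_const_nhds
    filter_upwards [eventually_gt_atTop (p.1 / p.2)] with μ hμ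
    have : p.1 < μ * p.2 := (div_lt_iff₀ hp2).1 hμ
    exact (Set.indicator_of_notMem (show p ∉ S1 μ from not_le.2 this) _).symm

end CstarAux
end Part6


open Topology Filter

/-- inf_{μ≥1} c*(μ) = ψ(α) and sup_{μ≥1} c*(μ) = 2∫₀^∞ ln(z) G_α(z) g_α(z) dz,
    the sup being attained at μ = 1. -/
theorem cstarW_inf_sup (α : ℝ) (hα : 0 < α) :
    sInf (cstarW α '' Set.Ici 1) = digamma α ∧
      sSup (cstarW α '' Set.Ici 1) =
        2 * ∫ z in Set.Ioi (0:ℝ), Real.log z * gammaCDF α z * gammaPDFReal α 1 z ∧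
      cstarW α 1 = 2 * ∫ z in Set.Ioi (0:ℝ), Real.log z * gammaCDF α z * gammaPDFReal α 1 z := by

  have hone : cstarW α 1
      = 2 * ∫ z in Set.Ioi (0:ℝ), Real.log z * gammaCDF α z * gammaPDFReal α 1 z := by
    rw [cstarW]
    simp only [div_one, one_mul]
    ring
  have hne : (cstarW α '' Set.Ici 1).Nonempty := ⟨cstarW α 1, ⟨1, Set.self_mem_Ici, rfl⟩⟩
  have hkey : ∀ μ : ℝ, 1 ≤ μ → cstarW α μ = digamma α + CstarAux.FF α μ := fun μ hμ =>
    CstarAux.cstar_key hα (lt_of_lt_of_le one_pos hμ)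
  have hlb : ∀ x ∈ cstarW α '' Set.Ici 1, digamma α ≤ x := by
    rintro x ⟨μ, hμ, rfl⟩
    rw [hkey μ hμ]
    linarith [CstarAux.FF_nonneg hα hμ]
  have hbdd : BddBelow (cstarW α '' Set.Ici 1) := ⟨digamma α, hlb⟩
  refine ⟨?_, ?_, hone⟩
  · refine le_antisymm ?_ (le_csInf hne hlb)
    have ht : Filter.Tendsto (cstarW α) Filter.atTop (𝓝 (digamma α)) := by
      have h0 : Filter.Tendsto (fun μ => digamma α + CstarAux.FF α μ) Filter.atTop
          (𝓝 (digamma α + 0)) := tendsto_const_nhds.add (CstarAux.FF_tendsto hα)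
      rw [add_zero] at h0
      refine h0.congr' ?_
      filter_upwards [Filter.eventually_ge_atTop 1] with μ hμ using (hkey μ hμ).symm
    refine ge_of_tendsto ht ?_
    filter_upwards [Filter.eventually_ge_atTop 1] with μ hμ using csInf_le hbdd ⟨μ, Set.mem_Ici.2 hμ, rfl⟩
  · have hgt : IsGreatest (cstarW α '' Set.Ici 1) (cstarW α 1) := by
      constructor
      · exact ⟨1, Set.self_mem_Ici, rfl⟩
      · rintro x ⟨μ, hμ, rfl⟩
        rw [hkey μ hμ, hkey 1 le_rfl]
        have := CstarAux.FF_mono hα le_rfl hμ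
        linarith
    rw [hgt.csSup_eq, hone]
end

section
/- Let β ≥ 1/√3 and x ∈ (β/(β+1), 1). Then k₂(x) = (β+1)x^{(β+1)/2} − β x^{(β+3)/2} − (β+1)x + β ≥ 0. -/
/-- For β ≥ 1/√3 and x ∈ (β/(β+1), 1),
    k₂(x) = (β+1)x^((β+1)/2) - βx^((β+3)/2) - (β+1)x + β ≥ 0. -/
theorem k2_nonneg (β x : ℝ) (hβ : 1 / Real.sqrt 3 ≤ β)
    (hx₁ : β / (β + 1) < x) (hx₂ : x < 1) :
    0 ≤ (β + 1) * x ^ ((β + 1) / 2) - β * x ^ ((β + 3) / 2) - (β + 1) * x + β := by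
  have hβ0 : 0 < β := lt_of_lt_of_le (by positivity) hβ
  have hx0 : 0 < x := lt_trans (by positivity) hx₁
  set A := x ^ ((β + 1) / 2) with hA
  have hA0 : 0 < A := Real.rpow_pos_of_pos hx0 _
  have hA1 : A ≤ 1 := Real.rpow_le_one hx0.le hx₂.le (by linarith)
  -- Bernoulli: (β+1)x - β ≤ x^(β+1)
  have hbern : (β + 1) * x - β ≤ x ^ (β + 1) := by
    have h := one_add_mul_self_le_rpow_one_add (s := x - 1) (by linarith) (p := β + 1)
      (by linarith)
    have h1 : (1 : ℝ) + (x - 1) = x := by ring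
    rw [h1] at h
    nlinarith [h]
  have hAA : A * A = x ^ (β + 1) := by
    rw [hA, ← Real.rpow_add hx0]
    norm_num
  have hsplit : x ^ ((β + 3) / 2) = A * x := by
    have h : (β + 3) / 2 = (β + 1) / 2 + 1 := by ring
    rw [hA, h, Real.rpow_add hx0, Real.rpow_one]
  have hB : 1 ≤ β + 1 - β * x := by nlinarith
  have key : (β + 1) * x - β ≤ A * (β + 1 - β * x) := by
    calc (β + 1) * x - β ≤ x ^ (β + 1) := hbern
      _ = A * A := hAA.symm
      _ ≤ A * (β + 1 - β * x) := by nlinarith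
  rw [hsplit]
  nlinarith [key]
end

section
/- Let X₁, X₂ be independent with X_i ~ Gamma(α, θ_i), θ_i > 0, α > 0, and let Z₁ = min{X₁,X₂}, H_M(θ) = ln θ₁ · 1{X₁ ≤ X₂} + ln θ₂ · 1{X₁ > X₂}, and θ = min{θ₁,θ₂}/max{θ₁,θ₂} ∈ (0,1]. Then E[ln Z₁ − H_M(θ)] = ∫₀^∞ ln(z)[1 − G_α(θz)] g_α(z) dz + ∫₀^∞ ln(z)[1 − G_α(z/θ)] g_α(z) dz. -/
open MeasureTheory ProbabilityTheory

namespace GammaHelper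

open Real Set
open scoped ENNReal NNReal

variable {α : ℝ}

lemma pdf_scale (hα : 0 < α) {a : ℝ} (ha : 0 < a) (y : ℝ) :
    gammaPDFReal α (1/a) y = (1/a) * gammaPDFReal α 1 (y/a) := by
  unfold gammaPDFReal
  have h1 : (0:ℝ) < 1/a := by positivity
  have hcond : 0 ≤ y / a ↔ 0 ≤ y := by
    constructor
    · intro h
      by_contra hy
      push_neg at hy
      have : y / a < 0 := div_neg_of_neg_of_pos hy ha
      linarith
    · intro h; positivity
  by_cases hy : 0 ≤ y
  · rw [if_pos hy, if_pos (hcond.mpr hy)]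
    have hpow : (1/a:ℝ) ^ α = (1/a) ^ (α - 1) * (1/a) := by
      rw [← Real.rpow_add_one (ne_of_gt h1) (α-1)]
      norm_num
    have hya : (y / a) ^ (α - 1) = y ^ (α-1) * (1/a) ^ (α-1) := by
      rw [div_eq_mul_inv, Real.mul_rpow hy (by positivity), one_div]
    have hexp : -(1/a * y) = -(1 * (y/a)) := by field_simp
    rw [hya, hpow, hexp, Real.one_rpow]
    ring
  · rw [if_neg hy, if_neg (fun h => hy (hcond.mp h)), mul_zero]

lemma pdfE_scale (hα : 0 < α) {a : ℝ} (ha : 0 < a) (y : ℝ) :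
    gammaPDF α (1/a) y = ENNReal.ofReal (1/a) * gammaPDF α 1 (y/a) := by
  rw [gammaPDF, gammaPDF, pdf_scale hα ha, ENNReal.ofReal_mul (by positivity)]

lemma map_scale (hα : 0 < α) {a : ℝ} (ha : 0 < a) :
    Measure.map (fun z => a * z) (gammaMeasure α 1) = gammaMeasure α (1/a) := by
  have hmg : Measurable fun y : ℝ => gammaPDF α 1 (y/a) :=
    ((measurable_gammaPDFReal α 1).comp (measurable_id.div_const a)).ennreal_ofReal
  ext s hs
  have hpre : MeasurableSet ((fun z : ℝ => a * z) ⁻¹' s) := (measurable_const_mul a) hs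
  rw [Measure.map_apply (measurable_const_mul a) hs]
  calc gammaMeasure α 1 ((fun z : ℝ => a * z) ⁻¹' s)
      = ∫⁻ x, ((fun z : ℝ => a * z) ⁻¹' s).indicator (gammaPDF α 1) x ∂volume := by
        rw [gammaMeasure, withDensity_apply _ hpre, lintegral_indicator hpre]
    _ = ∫⁻ x, s.indicator (fun y => gammaPDF α 1 (y/a)) (a * x) ∂volume := by
        refine lintegral_congr fun x => ?_
        classical
        rw [Set.indicator_apply, Set.indicator_apply]
        simp only [mem_preimage]
        refine if_congr Iff.rfl ?_ rfl
        rw [mul_comm, mul_div_assoc, div_self ha.ne', mul_one]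
    _ = ∫⁻ y, s.indicator (fun y => gammaPDF α 1 (y/a)) y ∂(Measure.map (a * ·) volume) := by
        rw [lintegral_map (hmg.indicator hs) (measurable_const_mul a)]
    _ = ENNReal.ofReal |a⁻¹| * ∫⁻ y, s.indicator (fun y => gammaPDF α 1 (y/a)) y ∂volume := by
        rw [Real.map_volume_mul_left ha.ne', lintegral_smul_measure, smul_eq_mul]
    _ = ∫⁻ y in s, ENNReal.ofReal (1/a) * gammaPDF α 1 (y/a) ∂volume := by
        rw [lintegral_indicator hs, ← lintegral_const_mul _ hmg, abs_of_pos (inv_pos.mpr ha),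
          one_div]
    _ = gammaMeasure α (1/a) s := by
        rw [gammaMeasure, withDensity_apply _ hs]
        refine (setLIntegral_congr_fun_ae hs (ae_of_all _ fun y _ => ?_))
        exact (pdfE_scale hα ha y).symm

lemma meas_Iic (hα : 0 < α) (x : ℝ) : (gammaMeasure α 1 (Iic x)).toReal = gammaCDF α x := by
  rw [gammaMeasure, withDensity_apply _ measurableSet_Iic, gammaCDF,
    integral_eq_lintegral_of_nonneg_ae (ae_of_all _ fun t => gammaPDFReal_nonneg hα one_pos t)
      (measurable_gammaPDFReal α 1).aestronglyMeasurable]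
  rfl

lemma meas_singleton (c : ℝ) : gammaMeasure α 1 {c} = 0 := by
  rw [gammaMeasure, withDensity_apply _ (measurableSet_singleton c)]
  exact setLIntegral_measure_zero _ _ (measure_singleton c)

lemma meas_Iio (x : ℝ) : gammaMeasure α 1 (Iio x) = gammaMeasure α 1 (Iic x) := by
  refine le_antisymm (measure_mono Iio_subset_Iic_self) ?_
  rw [← Iio_union_right]
  refine (measure_union_le _ _).trans ?_
  rw [meas_singleton, add_zero]

lemma meas_Iic_zero (hα : 0 < α) : gammaMeasure α 1 (Iic 0) = 0 := by
  rw [← meas_Iio, gammaMeasure, withDensity_apply _ measurableSet_Iio]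
  exact lintegral_gammaPDF_of_nonpos le_rfl

lemma meas_Ici (hα : 0 < α) (c : ℝ) :
    (gammaMeasure α 1 (Ici c)).toReal = 1 - gammaCDF α c := by
  haveI := isProbabilityMeasure_gammaMeasure hα one_pos
  have h1 : gammaMeasure α 1 (Ici c) = 1 - gammaMeasure α 1 (Iic c) := by
    rw [← compl_Iio, measure_compl measurableSet_Iio (measure_ne_top _ _), measure_univ, meas_Iio]
  rw [h1, ENNReal.toReal_sub_of_le prob_le_one ENNReal.one_ne_top, ENNReal.toReal_one,
    meas_Iic hα]

lemma meas_Ioi (hα : 0 < α) (c : ℝ) :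
    (gammaMeasure α 1 (Ioi c)).toReal = 1 - gammaCDF α c := by
  haveI := isProbabilityMeasure_gammaMeasure hα one_pos
  have h1 : gammaMeasure α 1 (Ioi c) = 1 - gammaMeasure α 1 (Iic c) := by
    rw [← compl_Iic, measure_compl measurableSet_Iic (measure_ne_top _ _), measure_univ]
  rw [h1, ENNReal.toReal_sub_of_le prob_le_one ENNReal.one_ne_top, ENNReal.toReal_one,
    meas_Iic hα]

lemma integral_gamma (hα : 0 < α) (φ : ℝ → ℝ) :
    ∫ x, φ x ∂(gammaMeasure α 1) = ∫ x in Ioi 0, φ x * gammaPDFReal α 1 x := by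
  have hg : Measurable fun x => (gammaPDFReal α 1 x).toNNReal :=
    (measurable_gammaPDFReal α 1).real_toNNReal
  have hrepr : gammaMeasure α 1
      = volume.withDensity (fun x => ((gammaPDFReal α 1 x).toNNReal : ℝ≥0∞)) := rfl
  rw [hrepr, integral_withDensity_eq_integral_smul hg φ]
  have heq : (fun x => (gammaPDFReal α 1 x).toNNReal • φ x) =ᵐ[volume]
      (Ioi 0).indicator (fun x => φ x * gammaPDFReal α 1 x) := by
    rw [Filter.EventuallyEq, ae_iff]
    refine measure_mono_null (fun x hx => ?_) (measure_singleton 0)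
    simp only [mem_setOf_eq] at hx
    by_contra h0
    apply hx
    rcases lt_trichotomy x 0 with h | h | h
    · rw [indicator_of_notMem (by simp [not_lt.mpr h.le])]
      have hz : gammaPDFReal α 1 x = 0 := by rw [gammaPDFReal, if_neg (not_le.mpr h)]
      simp [hz]
    · exact absurd h h0
    · rw [Set.indicator_of_mem (show x ∈ Ioi 0 from h)]
      rw [NNReal.smul_def, Real.coe_toNNReal _ (gammaPDFReal_nonneg hα one_pos x), smul_eq_mul, mul_comm]
  rw [integral_congr_ae heq, integral_indicator measurableSet_Ioi]

lemma key_integrable (hα : 0 < α) :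
    IntegrableOn (fun x => |Real.log x| * x ^ (α-1) * Real.exp (-x)) (Ioi (0:ℝ)) := by
  have hmeas : Measurable fun x : ℝ => |Real.log x| * x ^ (α-1) * Real.exp (-x) := by
    have h1 : Measurable fun x : ℝ => x ^ (α-1) := by fun_prop
    have h2 : Measurable fun x : ℝ => Real.exp (-x) := by fun_prop
    exact (Real.measurable_log.abs.mul h1).mul h2
  have hpiece1 : IntegrableOn (fun x => |Real.log x| * x ^ (α-1) * Real.exp (-x)) (Ioc (0:ℝ) 1) := by
    have hb : IntegrableOn (fun x : ℝ => (2/α) * x ^ (α/2 - 1)) (Ioc (0:ℝ) 1) := by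
      have := intervalIntegral.intervalIntegrable_rpow' (a := 0) (b := 1)
        (show (-1:ℝ) < α/2 - 1 by linarith)
      exact ((intervalIntegrable_iff_integrableOn_Ioc_of_le zero_le_one).mp this).const_mul _
    refine Integrable.mono' hb hmeas.aestronglyMeasurable ?_
    refine (ae_restrict_iff' measurableSet_Ioc).mpr (ae_of_all _ fun x hx => ?_)
    obtain ⟨hx0, hx1⟩ := hx
    have hlogle : |Real.log x| ≤ (2/α) * x ^ (-(α/2)) := by
      have hP : (0:ℝ) < x ^ (-(α/2)) := Real.rpow_pos_of_pos hx0 _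
      have h1 : Real.log (x ^ (-(α/2))) ≤ x ^ (-(α/2)) - 1 :=
        Real.log_le_sub_one_of_pos hP
      rw [Real.log_rpow hx0] at h1
      have h2 : Real.log x ≤ 0 := Real.log_nonpos hx0.le hx1
      rw [abs_of_nonpos h2]
      have h3 := mul_le_mul_of_nonneg_left h1 (by positivity : (0:ℝ) ≤ 2/α)
      have h4 : 2/α * (-(α/2) * Real.log x) = -Real.log x := by
        field_simp
      have h5 : 2/α * (x ^ (-(α/2)) - 1) ≤ 2/α * x ^ (-(α/2)) :=
        mul_le_mul_of_nonneg_left (by linarith) (by positivity)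
      linarith
    have hE : Real.exp (-x) ≤ 1 := Real.exp_le_one_iff.mpr (by linarith)
    have hA : (0:ℝ) ≤ x ^ (α-1) := Real.rpow_nonneg hx0.le _
    have hnorm : ‖|Real.log x| * x ^ (α-1) * Real.exp (-x)‖
        = |Real.log x| * x ^ (α-1) * Real.exp (-x) := by
      rw [Real.norm_eq_abs, abs_of_nonneg (by positivity)]
    rw [hnorm]
    calc |Real.log x| * x ^ (α-1) * Real.exp (-x)
        ≤ ((2/α) * x ^ (-(α/2))) * x ^ (α-1) * 1 := by
          apply mul_le_mul ?_ hE (Real.exp_nonneg _)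
          · positivity
          · exact mul_le_mul_of_nonneg_right hlogle hA
      _ = (2/α) * x ^ (α/2 - 1) := by
          rw [mul_one, mul_assoc, ← Real.rpow_add hx0,
            show -(α/2) + (α-1) = α/2 - 1 by ring]
  have hpiece2 : IntegrableOn (fun x => |Real.log x| * x ^ (α-1) * Real.exp (-x)) (Ioi (1:ℝ)) := by
    have hb : IntegrableOn (fun x : ℝ => Real.exp (-x) * x ^ ((α+1) - 1)) (Ioi (1:ℝ)) :=
      (Real.GammaIntegral_convergent (by linarith)).mono_set (Set.Ioi_subset_Ioi zero_le_one)
    refine Integrable.mono' hb hmeas.aestronglyMeasurable ?_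
    refine (ae_restrict_iff' measurableSet_Ioi).mpr (ae_of_all _ fun x hx => ?_)
    have hx1 : (1:ℝ) < x := hx
    have hx0 : (0:ℝ) < x := lt_trans one_pos hx1
    have hlogle : |Real.log x| ≤ x := by
      rw [abs_of_nonneg (Real.log_nonneg hx1.le)]
      have := Real.log_le_sub_one_of_pos hx0
      linarith
    have hA : (0:ℝ) ≤ x ^ (α-1) := Real.rpow_nonneg hx0.le _
    have hnorm : ‖|Real.log x| * x ^ (α-1) * Real.exp (-x)‖
        = |Real.log x| * x ^ (α-1) * Real.exp (-x) := by
      rw [Real.norm_eq_abs, abs_of_nonneg (by positivity)]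
    rw [hnorm]
    calc |Real.log x| * x ^ (α-1) * Real.exp (-x)
        ≤ x * x ^ (α-1) * Real.exp (-x) := by
          apply mul_le_mul_of_nonneg_right _ (Real.exp_nonneg _)
          exact mul_le_mul_of_nonneg_right hlogle hA
      _ = Real.exp (-x) * x ^ ((α+1) - 1) := by
          have : x * x ^ (α-1) = x ^ ((α+1) - 1) := by
            rw [show (α+1) - 1 = 1 + (α-1) by ring, Real.rpow_add hx0, Real.rpow_one]
          rw [this, mul_comm]
  have := hpiece1.union hpiece2
  rwa [Set.Ioc_union_Ioi_eq_Ioi zero_le_one] at this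

lemma log_pdf_integrable (hα : 0 < α) :
    Integrable (fun x => gammaPDFReal α 1 x * Real.log x) volume := by
  have hkey := key_integrable hα
  have hmeas : Measurable fun x => gammaPDFReal α 1 x * Real.log x :=
    (measurable_gammaPDFReal α 1).mul Real.measurable_log
  have hIoi : IntegrableOn (fun x => gammaPDFReal α 1 x * Real.log x) (Ioi (0:ℝ)) := by
    refine Integrable.mono' (hkey.const_mul (1/Real.Gamma α)) hmeas.aestronglyMeasurable ?_
    refine (ae_restrict_iff' measurableSet_Ioi).mpr (ae_of_all _ fun x hx => ?_)
    have hx0 : (0:ℝ) < x := hx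
    have hΓ : (0:ℝ) < Real.Gamma α := Real.Gamma_pos_of_pos hα
    have hpdf : gammaPDFReal α 1 x = 1/Real.Gamma α * (x ^ (α-1) * Real.exp (-x)) := by
      rw [gammaPDFReal, if_pos hx0.le, Real.one_rpow, one_mul]
      ring_nf
    rw [Real.norm_eq_abs, abs_mul, hpdf, abs_of_nonneg (by positivity)]
    have : 1/Real.Gamma α * (x ^ (α-1) * Real.exp (-x)) * |Real.log x|
        = 1/Real.Gamma α * (|Real.log x| * x ^ (α-1) * Real.exp (-x)) := by ring
    rw [this]
  have heq : (fun x => gammaPDFReal α 1 x * Real.log x)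
      = (Ioi (0:ℝ)).indicator (fun x => gammaPDFReal α 1 x * Real.log x) := by
    funext x
    by_cases hx : 0 < x
    · rw [Set.indicator_of_mem (show x ∈ Ioi 0 from hx)]
    · rw [Set.indicator_of_notMem (show x ∉ Ioi 0 from hx)]
      rcases eq_or_lt_of_le (not_lt.mp hx) with h | h
      · rw [h, Real.log_zero, mul_zero]
      · rw [gammaPDFReal, if_neg (not_le.mpr h), zero_mul]
  rw [heq]
  exact (integrable_indicator_iff measurableSet_Ioi).mpr hIoi

lemma integrable_log_gamma (hα : 0 < α) : Integrable Real.log (gammaMeasure α 1) := by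
  have hg : Measurable fun x => (gammaPDFReal α 1 x).toNNReal :=
    (measurable_gammaPDFReal α 1).real_toNNReal
  have hrepr : gammaMeasure α 1
      = volume.withDensity (fun x => ((gammaPDFReal α 1 x).toNNReal : ℝ≥0∞)) := rfl
  rw [hrepr]
  refine (integrable_withDensity_iff_integrable_smul (g := Real.log) hg).mpr ?_
  have heq : (fun x => (gammaPDFReal α 1 x).toNNReal • Real.log x)
      = fun x => gammaPDFReal α 1 x * Real.log x := by
    funext x
    rw [NNReal.smul_def, Real.coe_toNNReal _ (gammaPDFReal_nonneg hα one_pos x), smul_eq_mul]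
  rw [heq]
  exact log_pdf_integrable hα

lemma integrable_log_fst (hα : 0 < α) :
    Integrable (fun q : ℝ × ℝ => Real.log q.1)
      ((gammaMeasure α 1).prod (gammaMeasure α 1)) := by
  haveI := isProbabilityMeasure_gammaMeasure hα one_pos
  have hm : AEStronglyMeasurable (fun q : ℝ × ℝ => Real.log q.1)
      ((gammaMeasure α 1).prod (gammaMeasure α 1)) :=
    (Real.measurable_log.comp measurable_fst).aestronglyMeasurable
  rw [integrable_prod_iff hm]
  constructor
  · refine ae_of_all _ fun x => ?_
    simpa using integrable_const (μ := gammaMeasure α 1) (Real.log x)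
  · simpa [integral_const] using (integrable_log_gamma hα).norm

lemma integrable_log_snd (hα : 0 < α) :
    Integrable (fun q : ℝ × ℝ => Real.log q.2)
      ((gammaMeasure α 1).prod (gammaMeasure α 1)) := by
  haveI := isProbabilityMeasure_gammaMeasure hα one_pos
  have hm : AEStronglyMeasurable (fun q : ℝ × ℝ => Real.log q.2)
      ((gammaMeasure α 1).prod (gammaMeasure α 1)) :=
    (Real.measurable_log.comp measurable_snd).aestronglyMeasurable
  rw [integrable_prod_iff' hm]
  constructor
  · refine ae_of_all _ fun y => ?_
    simpa using integrable_const (μ := gammaMeasure α 1) (Real.log y)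
  · simpa [integral_const] using (integrable_log_gamma hα).norm

lemma psi1_integrable (hα : 0 < α) {θ₁ θ₂ : ℝ} :
    Integrable (fun q : ℝ × ℝ => if θ₁ * q.1 ≤ θ₂ * q.2 then Real.log q.1 else 0)
      ((gammaMeasure α 1).prod (gammaMeasure α 1)) := by
  have hψmeas : Measurable (fun q : ℝ × ℝ => if θ₁ * q.1 ≤ θ₂ * q.2 then Real.log q.1 else 0) :=
    Measurable.ite (measurableSet_le (measurable_fst.const_mul θ₁) (measurable_snd.const_mul θ₂))
      (Real.measurable_log.comp measurable_fst) measurable_const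
  refine Integrable.mono' (integrable_log_fst hα).abs hψmeas.aestronglyMeasurable
    (ae_of_all _ fun q => ?_)
  by_cases h : θ₁ * q.1 ≤ θ₂ * q.2
  · simp [h, Real.norm_eq_abs]
  · simp [h, abs_nonneg]

lemma psi2_integrable (hα : 0 < α) {θ₁ θ₂ : ℝ} :
    Integrable (fun q : ℝ × ℝ => if θ₂ * q.2 < θ₁ * q.1 then Real.log q.2 else 0)
      ((gammaMeasure α 1).prod (gammaMeasure α 1)) := by
  have hψmeas : Measurable (fun q : ℝ × ℝ => if θ₂ * q.2 < θ₁ * q.1 then Real.log q.2 else 0) :=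
    Measurable.ite (measurableSet_lt (measurable_snd.const_mul θ₂) (measurable_fst.const_mul θ₁))
      (Real.measurable_log.comp measurable_snd) measurable_const
  refine Integrable.mono' (integrable_log_snd hα).abs hψmeas.aestronglyMeasurable
    (ae_of_all _ fun q => ?_)
  by_cases h : θ₂ * q.2 < θ₁ * q.1
  · simp [h, Real.norm_eq_abs]
  · simp [h, abs_nonneg]

lemma T1 (hα : 0 < α) {θ₁ θ₂ : ℝ} (hθ₂ : 0 < θ₂) :
    ∫ q : ℝ × ℝ, (if θ₁ * q.1 ≤ θ₂ * q.2 then Real.log q.1 else 0)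
      ∂((gammaMeasure α 1).prod (gammaMeasure α 1))
    = ∫ z in Ioi (0:ℝ), Real.log z * (1 - gammaCDF α (θ₁ * z / θ₂)) * gammaPDFReal α 1 z := by
  haveI := isProbabilityMeasure_gammaMeasure hα one_pos
  rw [integral_prod _ (psi1_integrable hα)]
  have hinner : ∀ u : ℝ,
      (∫ v, (if θ₁ * u ≤ θ₂ * v then Real.log u else 0) ∂(gammaMeasure α 1))
      = (1 - gammaCDF α (θ₁ * u / θ₂)) * Real.log u := by
    intro u
    have hind : (fun v => if θ₁ * u ≤ θ₂ * v then Real.log u else 0)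
        = (Ici (θ₁ * u / θ₂)).indicator (fun _ => Real.log u) := by
      funext v
      classical
      rw [Set.indicator_apply]
      refine if_congr ?_ rfl rfl
      rw [mem_Ici, div_le_iff₀ hθ₂, mul_comm v θ₂]
    rw [hind, integral_indicator_const _ measurableSet_Ici, smul_eq_mul, measureReal_def, meas_Ici hα]
  simp_rw [hinner]
  rw [integral_gamma hα]
  exact setIntegral_congr_fun measurableSet_Ioi fun z hz => by ring

lemma T2 (hα : 0 < α) {θ₁ θ₂ : ℝ} (hθ₁ : 0 < θ₁) :
    ∫ q : ℝ × ℝ, (if θ₂ * q.2 < θ₁ * q.1 then Real.log q.2 else 0)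
      ∂((gammaMeasure α 1).prod (gammaMeasure α 1))
    = ∫ z in Ioi (0:ℝ), Real.log z * (1 - gammaCDF α (θ₂ * z / θ₁)) * gammaPDFReal α 1 z := by
  haveI := isProbabilityMeasure_gammaMeasure hα one_pos
  rw [integral_prod_symm _ (psi2_integrable hα)]
  have hinner : ∀ v : ℝ,
      (∫ u, (if θ₂ * v < θ₁ * u then Real.log v else 0) ∂(gammaMeasure α 1))
      = (1 - gammaCDF α (θ₂ * v / θ₁)) * Real.log v := by
    intro v
    have hind : (fun u => if θ₂ * v < θ₁ * u then Real.log v else 0)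
        = (Ioi (θ₂ * v / θ₁)).indicator (fun _ => Real.log v) := by
      funext u
      classical
      rw [Set.indicator_apply]
      refine if_congr ?_ rfl rfl
      rw [mem_Ioi, div_lt_iff₀ hθ₁, mul_comm u θ₁]
    rw [hind, integral_indicator_const _ measurableSet_Ioi, smul_eq_mul, measureReal_def, meas_Ioi hα]
  simp_rw [hinner]
  rw [integral_gamma hα]
  exact setIntegral_congr_fun measurableSet_Ioi fun z hz => by ring

end GammaHelper

/-- For independent X₁ ~ Gamma(α,θ₁), X₂ ~ Gamma(α,θ₂) (scale parametrization),
    with Z₁ = min{X₁,X₂}, H_M = ln θ₁ 1{X₁ ≤ X₂} + ln θ₂ 1{X₁ > X₂} and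
    θr = min{θ₁,θ₂}/max{θ₁,θ₂}:
    E[ln Z₁ - H_M] = ∫₀^∞ ln(z)(1-G_α(θr z)) g_α(z) dz + ∫₀^∞ ln(z)(1-G_α(z/θr)) g_α(z) dz. -/
theorem expectation_log_min_sub_selected {Ω : Type*} [MeasurableSpace Ω] (μ : Measure Ω)
    [IsProbabilityMeasure μ] (α θ₁ θ₂ : ℝ) (hα : 0 < α) (hθ₁ : 0 < θ₁) (hθ₂ : 0 < θ₂)
    (X₁ X₂ : Ω → ℝ) (hm₁ : Measurable X₁) (hm₂ : Measurable X₂)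
    (h₁ : Measure.map X₁ μ = gammaMeasure α (1 / θ₁))
    (h₂ : Measure.map X₂ μ = gammaMeasure α (1 / θ₂))
    (hind : IndepFun X₁ X₂ μ) (θr : ℝ) (hθr : θr = min θ₁ θ₂ / max θ₁ θ₂) :
    ∫ ω, (Real.log (min (X₁ ω) (X₂ ω)) -
        (if X₁ ω ≤ X₂ ω then Real.log θ₁ else Real.log θ₂)) ∂μ =
      (∫ z in Set.Ioi (0:ℝ), Real.log z * (1 - gammaCDF α (θr * z)) * gammaPDFReal α 1 z) +
        ∫ z in Set.Ioi (0:ℝ), Real.log z * (1 - gammaCDF α (z / θr)) * gammaPDFReal α 1 z := by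
  classical
  haveI hPν : IsProbabilityMeasure (gammaMeasure α 1) := isProbabilityMeasure_gammaMeasure hα one_pos
  haveI hP1 : IsProbabilityMeasure (gammaMeasure α (1/θ₁)) :=
    isProbabilityMeasure_gammaMeasure hα (by positivity)
  haveI hP2 : IsProbabilityMeasure (gammaMeasure α (1/θ₂)) :=
    isProbabilityMeasure_gammaMeasure hα (by positivity)
  have hFmeas : Measurable (fun p : ℝ × ℝ =>
      Real.log (min p.1 p.2) - (if p.1 ≤ p.2 then Real.log θ₁ else Real.log θ₂)) := by
    refine Measurable.sub (Real.measurable_log.comp (measurable_fst.min measurable_snd)) ?_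
    exact Measurable.ite (measurableSet_le measurable_fst measurable_snd) measurable_const
      measurable_const
  have hmap : Measure.map (fun ω => (X₁ ω, X₂ ω)) μ
      = (gammaMeasure α (1/θ₁)).prod (gammaMeasure α (1/θ₂)) := by
    rw [← h₁, ← h₂]
    exact (indepFun_iff_map_prod_eq_prod_map_map hm₁.aemeasurable hm₂.aemeasurable).mp hind
  have hpm : Measurable (Prod.map (fun z : ℝ => θ₁ * z) (fun z : ℝ => θ₂ * z)) :=
    (measurable_const_mul θ₁).prodMap (measurable_const_mul θ₂)
  have hprodmap : (gammaMeasure α (1/θ₁)).prod (gammaMeasure α (1/θ₂))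
      = ((gammaMeasure α 1).prod (gammaMeasure α 1)).map
          (Prod.map (fun z : ℝ => θ₁ * z) (fun z : ℝ => θ₂ * z)) := by
    rw [← GammaHelper.map_scale hα hθ₁, ← GammaHelper.map_scale hα hθ₂,
      Measure.map_prod_map _ _ (measurable_const_mul θ₁) (measurable_const_mul θ₂)]
  have step1 : ∫ ω, (Real.log (min (X₁ ω) (X₂ ω)) -
        (if X₁ ω ≤ X₂ ω then Real.log θ₁ else Real.log θ₂)) ∂μ
      = ∫ q : ℝ × ℝ, (Real.log (min (θ₁ * q.1) (θ₂ * q.2)) -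
          (if θ₁ * q.1 ≤ θ₂ * q.2 then Real.log θ₁ else Real.log θ₂))
          ∂((gammaMeasure α 1).prod (gammaMeasure α 1)) := by
    have e1 := integral_map (μ := μ) (hm₁.prodMk hm₂).aemeasurable hFmeas.aestronglyMeasurable
    rw [hmap, hprodmap] at e1
    have e2 := integral_map (μ := (gammaMeasure α 1).prod (gammaMeasure α 1)) hpm.aemeasurable
      hFmeas.aestronglyMeasurable
    rw [e2] at e1
    exact e1.symm
  have hnull : ((gammaMeasure α 1).prod (gammaMeasure α 1))
      ({q : ℝ × ℝ | q.1 ≤ 0} ∪ {q : ℝ × ℝ | q.2 ≤ 0}) = 0 := by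
    refine measure_union_null ?_ ?_
    · have h : {q : ℝ × ℝ | q.1 ≤ 0} = (Set.Iic 0) ×ˢ (Set.univ : Set ℝ) := by
        ext q; simp [Set.mem_prod]
      rw [h, Measure.prod_prod, GammaHelper.meas_Iic_zero hα, zero_mul]
    · have h : {q : ℝ × ℝ | q.2 ≤ 0} = (Set.univ : Set ℝ) ×ˢ (Set.Iic 0) := by
        ext q; simp [Set.mem_prod]
      rw [h, Measure.prod_prod, GammaHelper.meas_Iic_zero hα, mul_zero]
  have hae : (fun q : ℝ × ℝ => Real.log (min (θ₁ * q.1) (θ₂ * q.2)) -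
        (if θ₁ * q.1 ≤ θ₂ * q.2 then Real.log θ₁ else Real.log θ₂))
      =ᵐ[(gammaMeasure α 1).prod (gammaMeasure α 1)]
      (fun q => (if θ₁ * q.1 ≤ θ₂ * q.2 then Real.log q.1 else 0) +
        (if θ₂ * q.2 < θ₁ * q.1 then Real.log q.2 else 0)) := by
    rw [Filter.EventuallyEq, ae_iff]
    refine measure_mono_null (fun q hq => ?_) hnull
    simp only [Set.mem_setOf_eq] at hq
    by_contra hqn
    simp only [Set.mem_union, Set.mem_setOf_eq, not_or, not_le] at hqn
    obtain ⟨hu, hv⟩ := hqn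
    apply hq
    by_cases h : θ₁ * q.1 ≤ θ₂ * q.2
    · rw [min_eq_left h, if_pos h, if_pos h, if_neg (not_lt.mpr h),
        Real.log_mul hθ₁.ne' hu.ne']
      ring
    · rw [min_eq_right (le_of_lt (not_le.mp h)), if_neg h, if_neg h, if_pos (not_le.mp h),
        Real.log_mul hθ₂.ne' hv.ne']
      ring
  rw [step1, integral_congr_ae hae,
    integral_add (GammaHelper.psi1_integrable hα) (GammaHelper.psi2_integrable hα),
    GammaHelper.T1 hα hθ₂, GammaHelper.T2 hα hθ₁]
  rcases le_total θ₁ θ₂ with h | h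
  · have hr : θr = θ₁ / θ₂ := by rw [hθr, min_eq_left h, max_eq_right h]
    have e1 : (∫ z in Set.Ioi (0:ℝ),
          Real.log z * (1 - gammaCDF α (θr * z)) * gammaPDFReal α 1 z)
        = ∫ z in Set.Ioi (0:ℝ),
          Real.log z * (1 - gammaCDF α (θ₁ * z / θ₂)) * gammaPDFReal α 1 z := by
      refine setIntegral_congr_fun measurableSet_Ioi fun z hz => ?_
      rw [hr, div_mul_eq_mul_div]
    have e2 : (∫ z in Set.Ioi (0:ℝ),
          Real.log z * (1 - gammaCDF α (z / θr)) * gammaPDFReal α 1 z)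
        = ∫ z in Set.Ioi (0:ℝ),
          Real.log z * (1 - gammaCDF α (θ₂ * z / θ₁)) * gammaPDFReal α 1 z := by
      refine setIntegral_congr_fun measurableSet_Ioi fun z hz => ?_
      rw [hr, div_div_eq_mul_div, mul_comm z θ₂]
    rw [e1, e2]
  · have hr : θr = θ₂ / θ₁ := by rw [hθr, min_eq_right h, max_eq_left h]
    have e1 : (∫ z in Set.Ioi (0:ℝ),
          Real.log z * (1 - gammaCDF α (θr * z)) * gammaPDFReal α 1 z)
        = ∫ z in Set.Ioi (0:ℝ),
          Real.log z * (1 - gammaCDF α (θ₂ * z / θ₁)) * gammaPDFReal α 1 z := by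
      refine setIntegral_congr_fun measurableSet_Ioi fun z hz => ?_
      rw [hr, div_mul_eq_mul_div]
    have e2 : (∫ z in Set.Ioi (0:ℝ),
          Real.log z * (1 - gammaCDF α (z / θr)) * gammaPDFReal α 1 z)
        = ∫ z in Set.Ioi (0:ℝ),
          Real.log z * (1 - gammaCDF α (θ₁ * z / θ₂)) * gammaPDFReal α 1 z := by
      refine setIntegral_congr_fun measurableSet_Ioi fun z hz => ?_
      rw [hr, div_div_eq_mul_div, mul_comm z θ₁]
    rw [e1, e2, add_comm]
end
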